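/- arXiv:2310.05043 — 9 statements merged into one kernel-verified Lean document; each statement's English description precedes it below -/
import Mathlib

section
/- Let κ be an infinite regular cardinal and let 𝔎 be a full subcategory of a category 𝔏 such that conditions (L0)–(L3) hold and 𝔎 has the amalgamation property. If u⃗ = (U_α)_{α<κ} is a κ-Fraïssé sequence in 𝔎, then its limit U = lim u⃗ (which exists in 𝔏 by (L1)) is a 𝔎-generic object, i.e., U satisfies (G1) and (G2). -/
open CategoryTheory CategoryTheory.Limits Opposite

universe v u

theorem stmt0 {L : Type u} [Category.{v} L] (K : L → Prop)
    (κ : Cardinal.{0}) (hκ : κ.IsRegular)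
    -- (L0): all 𝔏-arrows are epimorphisms
    (hL0 : ∀ (A B : L) (f : A ⟶ B), Epi f)
    -- (L1): every inverse sequence of length κ in 𝔎 has a limit in 𝔏
    (hL1 : ∀ F : (↥(Set.Iio κ.ord))ᵒᵖ ⥤ L, (∀ i, K (F.obj i)) →
      ∃ c : Cone F, Nonempty (IsLimit c))
    -- (L2): every 𝔏-object is the limit of an inverse sequence in 𝔎
    (hL2 : ∀ X : L, ∃ (F : (↥(Set.Iio κ.ord))ᵒᵖ ⥤ L), (∀ i, K (F.obj i)) ∧
      ∃ π : (Functor.const _).obj X ⟶ F, Nonempty (IsLimit (⟨X, π⟩ : Cone F)))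
    -- (L3): arrows from the limit of a sequence into a 𝔎-object factor through a projection
    (hL3 : ∀ (F : (↥(Set.Iio κ.ord))ᵒᵖ ⥤ L), (∀ i, K (F.obj i)) →
      ∀ (c : Cone F), Nonempty (IsLimit c) → ∀ Y : L, K Y → ∀ f : c.pt ⟶ Y,
      ∃ (i : (↥(Set.Iio κ.ord))ᵒᵖ) (f' : F.obj i ⟶ Y), f = c.π.app i ≫ f')
    -- 𝔎 has the amalgamation property
    (hAP : ∀ (A B C : L), K A → K B → K C → ∀ (f : B ⟶ A) (g : C ⟶ A),
      ∃ D : L, K D ∧ ∃ (f' : D ⟶ B) (g' : D ⟶ C), f' ≫ f = g' ≫ g)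
    -- `Useq` is an inverse sequence of length κ in 𝔎
    (Useq : (↥(Set.Iio κ.ord))ᵒᵖ ⥤ L) (hUK : ∀ i, K (Useq.obj i))
    -- condition (U) of a κ-Fraïssé sequence
    (hU : ∀ X : L, K X → ∃ i : ↥(Set.Iio κ.ord), Nonempty (Useq.obj (op i) ⟶ X))
    -- condition (A) of a κ-Fraïssé sequence
    (hA : ∀ (i : ↥(Set.Iio κ.ord)) (Y : L), K Y → ∀ f : Y ⟶ Useq.obj (op i),
      ∃ (j : ↥(Set.Iio κ.ord)) (hij : i ≤ j) (g : Useq.obj (op j) ⟶ Y),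
        Useq.map (homOfLE hij).op = g ≫ f)
    -- `c` realizes `U = lim Useq` in 𝔏
    (c : Cone Useq) (hc : IsLimit c) :
    -- (G1) and (G2): the limit `c.pt` is a 𝔎-generic object
    (∀ X : L, K X → Nonempty (c.pt ⟶ X)) ∧
    (∀ (X Y : L), K X → K Y → ∀ (f : Y ⟶ X) (g : c.pt ⟶ X),
      ∃ h : c.pt ⟶ Y, h ≫ f = g) := by
  constructor
  · intro X hX
    obtain ⟨i, ⟨φ⟩⟩ := hU X hX
    exact ⟨c.π.app (op i) ≫ φ⟩
  · intro X Y hX hY f g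
    obtain ⟨i, f', hf'⟩ := hL3 Useq hUK c ⟨hc⟩ X hX g
    obtain ⟨D, hD, f'', g'', hcomm⟩ := hAP X Y (Useq.obj i) hX hY (hUK i) f f'
    obtain ⟨j, hij, g₀, hg₀⟩ := hA i.unop D hD g''
    refine ⟨c.π.app (op j) ≫ g₀ ≫ f'', ?_⟩
    have hw : c.π.app (op j) ≫ Useq.map (homOfLE hij).op = c.π.app (op i.unop) :=
      c.w (homOfLE hij).op
    calc (c.π.app (op j) ≫ g₀ ≫ f'') ≫ f
        = c.π.app (op j) ≫ g₀ ≫ (f'' ≫ f) := by simp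
      _ = c.π.app (op j) ≫ g₀ ≫ g'' ≫ f' := by rw [hcomm]
      _ = c.π.app (op j) ≫ (g₀ ≫ g'') ≫ f' := by simp
      _ = c.π.app (op j) ≫ Useq.map (homOfLE hij).op ≫ f' := by rw [← hg₀]
      _ = (c.π.app (op j) ≫ Useq.map (homOfLE hij).op) ≫ f' := by simp
      _ = c.π.app (op i.unop) ≫ f' := by rw [hw]
      _ = g := by rw [← hf']
end

section
/- Let κ be an infinite regular cardinal and let 𝔎 be a full subcategory of a category 𝔏 such that conditions (L0)–(L3) hold. If u⃗ = (U_α)_{α<κ} is an inverse sequence of length κ in 𝔎 whose limit U = lim u⃗ is a 𝔎-generic object, then u⃗ is a κ-Fraïssé sequence in 𝔎. -/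
open CategoryTheory CategoryTheory.Limits Opposite

universe v u

theorem stmt1 {L : Type u} [Category.{v} L] (K : L → Prop)
    (κ : Cardinal.{0}) (hκ : κ.IsRegular)
    -- (L0): all 𝔏-arrows are epimorphisms
    (hL0 : ∀ (A B : L) (f : A ⟶ B), Epi f)
    -- (L1): every inverse sequence of length κ in 𝔎 has a limit in 𝔏
    (hL1 : ∀ F : (↥(Set.Iio κ.ord))ᵒᵖ ⥤ L, (∀ i, K (F.obj i)) →
      ∃ c : Cone F, Nonempty (IsLimit c))
    -- (L2): every 𝔏-object is the limit of an inverse sequence in 𝔎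
    (hL2 : ∀ X : L, ∃ (F : (↥(Set.Iio κ.ord))ᵒᵖ ⥤ L), (∀ i, K (F.obj i)) ∧
      ∃ π : (Functor.const _).obj X ⟶ F, Nonempty (IsLimit (⟨X, π⟩ : Cone F)))
    -- (L3): arrows from the limit of a sequence into a 𝔎-object factor through a projection
    (hL3 : ∀ (F : (↥(Set.Iio κ.ord))ᵒᵖ ⥤ L), (∀ i, K (F.obj i)) →
      ∀ (c : Cone F), Nonempty (IsLimit c) → ∀ Y : L, K Y → ∀ f : c.pt ⟶ Y,
      ∃ (i : (↥(Set.Iio κ.ord))ᵒᵖ) (f' : F.obj i ⟶ Y), f = c.π.app i ≫ f')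
    -- `Useq` is an inverse sequence of length κ in 𝔎
    (Useq : (↥(Set.Iio κ.ord))ᵒᵖ ⥤ L) (hUK : ∀ i, K (Useq.obj i))
    -- `c` realizes `U = lim Useq` in 𝔏
    (c : Cone Useq) (hc : IsLimit c)
    -- (G1): the limit `c.pt` admits an arrow to every 𝔎-object
    (hG1 : ∀ X : L, K X → Nonempty (c.pt ⟶ X))
    -- (G2): every 𝔏-arrow from `c.pt` lifts against 𝔎-arrows
    (hG2 : ∀ (X Y : L), K X → K Y → ∀ (f : Y ⟶ X) (g : c.pt ⟶ X),
      ∃ h : c.pt ⟶ Y, h ≫ f = g) :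
    -- conditions (U) and (A): `Useq` is a κ-Fraïssé sequence in 𝔎
    (∀ X : L, K X → ∃ i : ↥(Set.Iio κ.ord), Nonempty (Useq.obj (op i) ⟶ X)) ∧
    (∀ (i : ↥(Set.Iio κ.ord)) (Y : L), K Y → ∀ f : Y ⟶ Useq.obj (op i),
      ∃ (j : ↥(Set.Iio κ.ord)) (hij : i ≤ j) (g : Useq.obj (op j) ⟶ Y),
        Useq.map (homOfLE hij).op = g ≫ f) := by
  constructor
  · intro X hX
    obtain ⟨f⟩ := hG1 X hX
    obtain ⟨i, f', hf⟩ := hL3 Useq hUK c ⟨hc⟩ X hX f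
    exact ⟨i.unop, ⟨f'⟩⟩
  · intro i Y hY f
    obtain ⟨h, hh⟩ := hG2 (Useq.obj (op i)) Y (hUK _) hY f (c.π.app (op i))
    obtain ⟨j', g', hg'⟩ := hL3 Useq hUK c ⟨hc⟩ Y hY h
    refine ⟨⟨max i.1 j'.unop.1, Set.mem_Iio.mpr (max_lt i.2 j'.unop.2)⟩,
      Subtype.coe_le_coe.mp (le_max_left _ _), ?_⟩
    have hj' : j'.unop ≤ (⟨max i.1 j'.unop.1, Set.mem_Iio.mpr (max_lt i.2 j'.unop.2)⟩ : Set.Iio κ.ord) :=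
      Subtype.coe_le_coe.mp (le_max_right _ _)
    refine ⟨Useq.map (homOfLE hj').op ≫ g', ?_⟩
    have := hL0 _ _ (c.π.app (op (⟨max i.1 j'.unop.1, Set.mem_Iio.mpr (max_lt i.2 j'.unop.2)⟩ : Set.Iio κ.ord)))
    rw [← cancel_epi (c.π.app (op (⟨max i.1 j'.unop.1, Set.mem_Iio.mpr (max_lt i.2 j'.unop.2)⟩ : Set.Iio κ.ord)))]
    rw [c.w, ← Category.assoc, ← Category.assoc, c.w]
    simp only [op_unop] at *
    rw [← hg', hh]
end

section
/- Fix a compact Hausdorff 0-dimensional space K. Let (φ_α : K → U_α)_{α<ω₁} be a continuous ω₁-Fraïssé sequence in the category 𝔠_K, let U_{ω₁} = lim←(U_α)_{α<ω₁} be the inverse limit of the spaces U_α, and let φ_{ω₁} : K → U_{ω₁} be the induced limit map. Then the image φ_{ω₁}[K] is a nowhere dense closed P-set in U_{ω₁}. -/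
open Set Function

/-- A topological space is 0-dimensional if the clopen sets form a base of the topology. -/
def ZeroDim (X : Type*) [TopologicalSpace X] : Prop :=
  TopologicalSpace.IsTopologicalBasis {s : Set X | IsClopen s}

/-- A subset `P` of a topological space is a P-set if the intersection of every countable
family of neighborhoods of `P` is again a neighborhood of `P`. -/
def IsPSet {X : Type*} [TopologicalSpace X] (P : Set X) : Prop :=
  ∀ V : ℕ → Set X, (∀ n, P ⊆ interior (V n)) → P ⊆ interior (⋂ n, V n)

/-- A compact metrizable 0-dimensional space: the codomain of an object of `𝔠_K`. -/
structure CMZ : Type 2 where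
  carrier : Type 1
  top : TopologicalSpace carrier
  compact : @CompactSpace carrier top
  metrizable : @TopologicalSpace.MetrizableSpace carrier top
  zeroDim : @ZeroDim carrier top

attribute [instance] CMZ.top CMZ.compact CMZ.metrizable

/-- The first uncountable ordinal. -/
noncomputable def omega1 : Ordinal := (Cardinal.aleph 1).ord


open Set Function Filter Topology TopologicalSpace

section Aux

/-- Projection at index `i` from the inverse limit. -/
private def projAux {ι : Type u} [Preorder ι] {X : ι → Type v}
    (u : ∀ i j : ι, i ≤ j → X j → X i) (i : ι)
    (z : {y : ∀ i, X i // ∀ i j (h : i ≤ j), u i j h (y j) = y i}) : X i :=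
  z.1 i

private lemma continuous_projAux {ι : Type u} [Preorder ι] {X : ι → Type v}
    [∀ i, TopologicalSpace (X i)] (u : ∀ i j : ι, i ≤ j → X j → X i) (i : ι) :
    Continuous (projAux u i) :=
  (continuous_apply i).comp continuous_subtype_val

private lemma mem_nhds_proj {ι : Type u} [SemilatticeSup ι] [Nonempty ι]
    {X : ι → Type v} [∀ i, TopologicalSpace (X i)]
    {u : ∀ i j : ι, i ≤ j → X j → X i} (hu_cont : ∀ i j h, Continuous (u i j h))
    (w : {y : ∀ i, X i // ∀ i j (h : i ≤ j), u i j h (y j) = y i})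
    (S : Set {y : ∀ i, X i // ∀ i j (h : i ≤ j), u i j h (y j) = y i}) :
    S ∈ 𝓝 w ↔ ∃ (i : ι) (V : Set (X i)), IsOpen V ∧ w.1 i ∈ V ∧
      {z : {y : ∀ i, X i // ∀ i j (h : i ≤ j), u i j h (y j) = y i} | z.1 i ∈ V} ⊆ S := by
  let L := {y : ∀ i, X i // ∀ i j (h : i ≤ j), u i j h (y j) = y i}
  have hnhds : 𝓝 w = ⨅ i, Filter.comap (fun z : L => z.1 i) (𝓝 (w.1 i)) := by
    obtain ⟨wv, wp⟩ := w
    rw [nhds_subtype_eq_comap, nhds_pi, Filter.pi, Filter.comap_iInf]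
    simp only [Filter.comap_comap]
    rfl
  have key : ∀ (i m : ι) (h : i ≤ m),
      Filter.comap (fun z : L => z.1 m) (𝓝 (w.1 m)) ≤
        Filter.comap (fun z : L => z.1 i) (𝓝 (w.1 i)) := by
    intro i m h
    have h1 : (fun z : L => z.1 i) = (u i m h) ∘ (fun z : L => z.1 m) :=
      funext fun z => (z.2 i m h).symm
    have h2 : w.1 i = u i m h (w.1 m) := (w.2 i m h).symm
    rw [h1, h2, ← Filter.comap_comap]
    exact Filter.comap_mono ((hu_cont i m h).continuousAt (x := w.1 m)).le_comap
  have hdir : Directed (· ≥ ·) (fun i => Filter.comap (fun z : L => z.1 i) (𝓝 (w.1 i))) :=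
    fun i j => ⟨i ⊔ j, key i (i ⊔ j) le_sup_left, key j (i ⊔ j) le_sup_right⟩
  rw [hnhds, Filter.mem_iInf_of_directed hdir]
  constructor
  · rintro ⟨i, hi⟩
    rcases Filter.mem_comap.mp hi with ⟨t, ht, hts⟩
    rcases mem_nhds_iff.mp ht with ⟨V, hVt, hVo, hwV⟩
    exact ⟨i, V, hVo, hwV, fun z hz => hts (hVt hz)⟩
  · rintro ⟨i, V, hVo, hwV, hsub⟩
    exact ⟨i, Filter.mem_comap.mpr ⟨V, hVo.mem_nhds hwV, hsub⟩⟩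

private lemma proj_surj {ι : Type u} [LinearOrder ι] {X : ι → Type v}
    [∀ i, TopologicalSpace (X i)] [∀ i, CompactSpace (X i)] [∀ i, T2Space (X i)]
    {u : ∀ i j : ι, i ≤ j → X j → X i}
    (hu_cont : ∀ i j h, Continuous (u i j h))
    (hu_surj : ∀ i j h, Surjective (u i j h))
    (hu_comp : ∀ i j k (hij : i ≤ j) (hjk : j ≤ k),
      u i j hij ∘ u j k hjk = u i k (le_trans hij hjk))
    (hne : ∀ i, Nonempty (X i)) (j : ι) (z : X j) :
    ∃ y : ∀ i, X i, (∀ i k (h : i ≤ k), u i k h (y k) = y i) ∧ y j = z := by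
  set s : Set (∀ i, X i) := {y | y j = z} with hs_def
  have hs_closed : IsClosed s := isClosed_eq (continuous_apply j) continuous_const
  set Z : {p : ι × ι // p.1 ≤ p.2} → Set (∀ i, X i) :=
    fun p => {y | u p.1.1 p.1.2 p.2 (y p.1.2) = y p.1.1} with hZ_def
  have hZ_closed : ∀ p, IsClosed (Z p) := fun p =>
    isClosed_eq ((hu_cont _ _ _).comp (continuous_apply _)) (continuous_apply _)
  rcases (s ∩ ⋂ p, Z p).eq_empty_or_nonempty with hemp | ⟨y, hy⟩
  · exfalso
    obtain ⟨t, ht⟩ := hs_closed.isCompact.elim_finite_subfamily_closed Z hZ_closed hemp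
    classical
    set F : Finset ι := insert j (t.image fun p => p.1.2) with hF
    have hjF : j ∈ F := Finset.mem_insert_self _ _
    set m : ι := F.max' ⟨j, hjF⟩ with hm
    have hjm : j ≤ m := F.le_max' j hjF
    have hpm : ∀ p ∈ t, p.1.2 ≤ m := fun p hp =>
      F.le_max' _ (Finset.mem_insert_of_mem (Finset.mem_image_of_mem _ hp))
    obtain ⟨z', hz'⟩ := hu_surj j m hjm z
    set y : ∀ i, X i := fun i => if h : i ≤ m then u i m h z' else (hne i).some with hy_def
    have hys : y ∈ s := by
      show y j = z
      simp only [hy_def, dif_pos hjm]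
      exact hz'
    have hyZ : ∀ p ∈ t, y ∈ Z p := by
      rintro ⟨⟨i, k⟩, hik⟩ hp
      have hkm : k ≤ m := hpm _ hp
      have him : i ≤ m := le_trans hik hkm
      show u i k hik (y k) = y i
      simp only [hy_def, dif_pos hkm, dif_pos him]
      exact congrFun (hu_comp i k m hik hkm) z'
    have : y ∈ s ∩ ⋂ p ∈ t, Z p := ⟨hys, Set.mem_iInter₂.mpr hyZ⟩
    rw [ht] at this
    exact this
  · rcases Set.mem_iInter.mp hy.2 with _
    refine ⟨y, ?_, hy.1⟩
    intro i k h
    exact Set.mem_iInter.mp hy.2 ⟨⟨i, k⟩, h⟩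

/-- Shrink an open neighborhood of a compact set to a clopen one in a 0-dimensional space. -/
private lemma exists_clopen_between {X : Type*} [TopologicalSpace X] (hX : ZeroDim X)
    {F W : Set X} (hF : IsCompact F) (hW : IsOpen W) (hFW : F ⊆ W) :
    ∃ C, IsClopen C ∧ F ⊆ C ∧ C ⊆ W := by
  classical
  have hex : ∀ x : X, x ∈ F → ∃ C, IsClopen C ∧ x ∈ C ∧ C ⊆ W := by
    intro x hx
    obtain ⟨C, hC, hxC, hCW⟩ := hX.exists_subset_of_mem_open (hFW hx) hW
    exact ⟨C, hC, hxC, hCW⟩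
  choose! C hC hmem hsub using hex
  obtain ⟨t, ht⟩ := hF.elim_finite_subcover (fun x : F => C x.1)
    (fun x => (hC x.1 x.2).2) (fun x hx => Set.mem_iUnion.mpr ⟨⟨x, hx⟩, hmem x hx⟩)
  refine ⟨⋃ x ∈ t, C x.1, ?_, ht, ?_⟩
  · exact Set.Finite.isClopen_biUnion t.finite_toSet (fun x hx => hC x.1 x.2)
  · exact Set.iUnion₂_subset fun x _ => hsub x.1 x.2

private lemma zeroDim_of_td {X : Type*} [TopologicalSpace X] [CompactSpace X] [T2Space X]
    [TotallyDisconnectedSpace X] : ZeroDim X :=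
  isTopologicalBasis_isClopen

private lemma ZeroDim.totallyDisconnected {X : Type*} [TopologicalSpace X] [T2Space X]
    (hX : ZeroDim X) : TotallyDisconnectedSpace X := by
  have : TotallySeparatedSpace X := by
    constructor
    intro x _ y _ hxy
    obtain ⟨Uo, Vo, hUo, hVo, hxU, hyV, hUV⟩ := t2_separation hxy
    obtain ⟨Cs, hCs, hxC, hCU⟩ := hX.exists_subset_of_mem_open hxU hUo
    refine ⟨Cs, Csᶜ, hCs.2, hCs.1.isOpen_compl, hxC, ?_, ?_, disjoint_compl_right⟩
    · exact fun hyC => hUV.ne_of_mem (hCU hyC) hyV rfl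
    · simp
  infer_instance

private instance (X : CMZ) : TotallyDisconnectedSpace X.carrier :=
  X.zeroDim.totallyDisconnected

private instance (X : CMZ) : SecondCountableTopology X.carrier := by
  letI := TopologicalSpace.metrizableSpaceMetric X.carrier
  infer_instance

end Aux

theorem stmt3
    (K : Type 1) [TopologicalSpace K] [CompactSpace K] [T2Space K] (hK : ZeroDim K)
    -- an inverse sequence of objects `φ i : K → U i` of `𝔠_K`, indexed by the ordinals `< ω₁`
    (U : ↥(Set.Iio omega1) → CMZ)
    (u : ∀ i j : ↥(Set.Iio omega1), i ≤ j → (U j).carrier → (U i).carrier)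
    (hu_cont : ∀ i j h, Continuous (u i j h))
    (hu_surj : ∀ i j h, Surjective (u i j h))
    (hu_id : ∀ i, u i i le_rfl = id)
    (hu_comp : ∀ i j k (hij : i ≤ j) (hjk : j ≤ k),
      u i j hij ∘ u j k hjk = u i k (le_trans hij hjk))
    (φ : ∀ i, K → (U i).carrier)
    (hφ_cont : ∀ i, Continuous (φ i))
    (hφ : ∀ i j (h : i ≤ j), u i j h ∘ φ j = φ i)
    -- condition (U) of an ω₁-Fraïssé sequence in `𝔠_K`
    (hfraisseU : ∀ (X : CMZ) (ψ : K → X.carrier), Continuous ψ →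
      ∃ (i : ↥(Set.Iio omega1)) (q : (U i).carrier → X.carrier),
        Continuous q ∧ Surjective q ∧ q ∘ φ i = ψ)
    -- condition (A) of an ω₁-Fraïssé sequence in `𝔠_K`
    (hfraisseA : ∀ (i : ↥(Set.Iio omega1)) (X : CMZ) (ψ : K → X.carrier), Continuous ψ →
      ∀ q : X.carrier → (U i).carrier, Continuous q → Surjective q → q ∘ ψ = φ i →
      ∃ (j : ↥(Set.Iio omega1)) (hij : i ≤ j) (g : (U j).carrier → X.carrier),
        Continuous g ∧ Surjective g ∧ q ∘ g = u i j hij ∧ g ∘ φ j = ψ)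
    -- the sequence is continuous: at every limit ordinal the sequence is the inverse limit
    -- of its restriction (the canonical comparison map is a bijection, hence, all spaces
    -- being compact Hausdorff, a homeomorphism)
    (hcontinuous : ∀ i : ↥(Set.Iio omega1), Order.IsSuccLimit i.1 →
      Function.Bijective (fun x : (U i).carrier =>
        (⟨fun j : {j : ↥(Set.Iio omega1) // j < i} => u j.1 i (le_of_lt j.2) x,
          fun j k h => congrFun (hu_comp j.1 k.1 i h (le_of_lt k.2)) x⟩ :
          {y : ∀ j : {j : ↥(Set.Iio omega1) // j < i}, (U j.1).carrier //
            ∀ j k (h : j.1 ≤ k.1), u j.1 k.1 h (y k) = y j}))) :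
    -- the image of `K` under the limit map `φ_{ω₁} : K → U_{ω₁} = lim U` is a
    -- nowhere dense closed P-set in the inverse limit
    IsClosed (Set.range (fun x : K =>
      (⟨fun i => φ i x, fun i j h => congrFun (hφ i j h) x⟩ :
        {y : ∀ i, (U i).carrier // ∀ i j (h : i ≤ j), u i j h (y j) = y i}))) ∧
    IsNowhereDense (Set.range (fun x : K =>
      (⟨fun i => φ i x, fun i j h => congrFun (hφ i j h) x⟩ :
        {y : ∀ i, (U i).carrier // ∀ i j (h : i ≤ j), u i j h (y j) = y i}))) ∧
    IsPSet (Set.range (fun x : K =>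
      (⟨fun i => φ i x, fun i j h => congrFun (hφ i j h) x⟩ :
        {y : ∀ i, (U i).carrier // ∀ i j (h : i ≤ j), u i j h (y j) = y i}))) := by
  
  classical
  haveI : Nonempty ↥(Set.Iio omega1) := ⟨⟨0, by
    rw [Set.mem_Iio, omega1, ← Cardinal.ord_zero]
    exact Cardinal.ord_lt_ord.2 (Cardinal.aleph_pos 1)⟩⟩
  let L := {y : ∀ i, (U i).carrier // ∀ i j (h : i ≤ j), u i j h (y j) = y i}
  let Φ : K → L := fun x => ⟨fun i => φ i x, fun i j h => congrFun (hφ i j h) x⟩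
  have hΦ_cont : Continuous Φ :=
    Continuous.subtype_mk (continuous_pi fun i => hφ_cont i)
      (fun x => fun i j h => congrFun (hφ i j h) x)
  have hclosed : IsClosed (Set.range Φ) := (isCompact_range hΦ_cont).isClosed
  have hπ_cont : ∀ i, Continuous (fun z : L => z.1 i) := fun i =>
    (continuous_apply i).comp continuous_subtype_val
  have hND : IsNowhereDense (Set.range Φ) := by
    rw [hclosed.isNowhereDense_iff]
    rcases (interior (Set.range Φ)).eq_empty_or_nonempty with h | ⟨w, hw⟩
    · exact h
    exfalso
    have hmem : Set.range Φ ∈ 𝓝 w := mem_interior_iff_mem_nhds.mp hw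
    obtain ⟨i, V, hVo, hwV, hVsub⟩ := (mem_nhds_proj hu_cont w _).mp hmem
    have hYzd : ZeroDim ((U i).carrier ⊕ (U i).carrier) := zeroDim_of_td
    let Y : CMZ := ⟨(U i).carrier ⊕ (U i).carrier, inferInstance, inferInstance,
      inferInstance, hYzd⟩
    let ψ : K → Y.carrier := fun x => Sum.inl (φ i x)
    let q : Y.carrier → (U i).carrier := Sum.elim id id
    obtain ⟨j, hij, g, hg_cont, hg_surj, hqg, hgφ⟩ :=
      hfraisseA i Y ψ (continuous_inl.comp (hφ_cont i)) q
        (continuous_id.sumElim continuous_id) (fun y => ⟨Sum.inl y, rfl⟩) rfl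
    obtain ⟨z, hz⟩ := hg_surj (Sum.inr (w.1 i))
    have hne : ∀ k, Nonempty ((U k).carrier) := fun k => ⟨w.1 k⟩
    obtain ⟨y, hyc, hyj⟩ := proj_surj hu_cont hu_surj hu_comp hne j z
    have hyi : y i = u i j hij z := by rw [← hyj]; exact (hyc i j hij).symm
    have hyiV : y i ∈ V := by
      have h2 : q (g z) = u i j hij z := congrFun hqg z
      rw [hyi, ← h2, hz]
      exact hwV
    obtain ⟨x, hx⟩ := hVsub (show (⟨y, hyc⟩ : L).1 i ∈ V from hyiV)
    have hφjx : φ j x = z := (congrFun (congrArg Subtype.val hx) j).trans hyj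
    have h1 : g (φ j x) = Sum.inl (φ i x) := congrFun hgφ x
    rw [hφjx, hz] at h1
    cases h1
  have hPSet : IsPSet (Set.range Φ) := by
    intro V hV
    rcases isEmpty_or_nonempty K with hK0 | hK1
    · rw [Set.range_eq_empty]
      exact Set.empty_subset _
    have key : ∀ n, ∃ (mn : ↥(Set.Iio omega1)) (W : Set ((U mn).carrier)), IsOpen W ∧
        (∀ y : K, φ mn y ∈ W) ∧ {z : L | z.1 mn ∈ W} ⊆ V n := by
      intro n
      have hx : ∀ x : K, ∃ (i : ↥(Set.Iio omega1)) (O : Set ((U i).carrier)),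
          IsOpen O ∧ φ i x ∈ O ∧ {z : L | z.1 i ∈ O} ⊆ V n := by
        intro x
        have hx1 : V n ∈ 𝓝 (Φ x) := mem_interior_iff_mem_nhds.mp (hV n ⟨x, rfl⟩)
        obtain ⟨i, O, hOo, hmem, hsub⟩ := (mem_nhds_proj hu_cont (Φ x) _).mp hx1
        exact ⟨i, O, hOo, hmem, hsub⟩
      choose iF OF hOo hOmem hOsub using hx
      obtain ⟨t, ht⟩ := isCompact_univ.elim_finite_subcover
        (fun x : K => φ (iF x) ⁻¹' OF x) (fun x => (hOo x).preimage (hφ_cont _))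
        (fun x _ => Set.mem_iUnion.mpr ⟨x, hOmem x⟩)
      have htne : t.Nonempty := by
        obtain ⟨x⟩ := hK1
        rcases Set.mem_iUnion₂.mp (ht (Set.mem_univ x)) with ⟨x', hx', _⟩
        exact ⟨x', hx'⟩
      set mn : ↥(Set.Iio omega1) := (t.image iF).max' (htne.image iF) with hmn
      have hle : ∀ x ∈ t, iF x ≤ mn := fun x hx =>
        (t.image iF).le_max' _ (Finset.mem_image_of_mem _ hx)
      set sfun : K → Set ((U mn).carrier) := fun x =>
        if h : iF x ≤ mn then u (iF x) mn h ⁻¹' OF x else ∅ with hsfun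
      refine ⟨mn, ⋃ x ∈ t, sfun x, ?_, ?_, ?_⟩
      · refine isOpen_biUnion fun x _ => ?_
        by_cases h : iF x ≤ mn
        · simp only [hsfun, dif_pos h]; exact (hOo x).preimage (hu_cont _ _ _)
        · simp only [hsfun, dif_neg h]; exact isOpen_empty
      · intro y
        rcases Set.mem_iUnion₂.mp (ht (Set.mem_univ y)) with ⟨x, hxt, hyx⟩
        refine Set.mem_biUnion hxt ?_
        simp only [hsfun, dif_pos (hle x hxt)]
        show u (iF x) mn (hle x hxt) (φ mn y) ∈ OF x
        have h3 : u (iF x) mn (hle x hxt) (φ mn y) = φ (iF x) y :=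
          congrFun (hφ (iF x) mn (hle x hxt)) y
        rw [h3]
        exact hyx
      · intro z hz
        rcases Set.mem_iUnion₂.mp hz with ⟨x, hxt, hzx⟩
        have h : iF x ≤ mn := hle x hxt
        apply hOsub x
        show z.1 (iF x) ∈ OF x
        simp only [hsfun, dif_pos h] at hzx
        rw [← z.2 (iF x) mn h]
        exact hzx
    choose m W hWo hWmem hWsub using key
    have hη : ∃ η : ↥(Set.Iio omega1), ∀ n, m n ≤ η := by
      have hlt : (⨆ n, (m n).1) < omega1 := by
        apply Ordinal.iSup_lt_ord_lift
        · rw [Cardinal.mk_nat, Cardinal.lift_aleph0, omega1,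
            Cardinal.isRegular_aleph_one.cof_eq]
          exact Cardinal.aleph0_lt_aleph_one
        · exact fun n => (m n).2
      exact ⟨⟨_, hlt⟩, fun n => Ordinal.le_iSup (fun n => (m n).1) n⟩
    obtain ⟨η, hηle⟩ := hη
    have hCn : ∀ n, ∃ C : Set ((U η).carrier), IsClopen C ∧ (∀ y : K, φ η y ∈ C) ∧
        {z : L | z.1 η ∈ C} ⊆ V n := by
      intro n
      obtain ⟨C0, hC0, hFC0, hC0W⟩ := exists_clopen_between (U (m n)).zeroDim
        (isCompact_range (hφ_cont (m n))) (hWo n) (Set.range_subset_iff.mpr (hWmem n))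
      refine ⟨u (m n) η (hηle n) ⁻¹' C0, hC0.preimage (hu_cont _ _ _), ?_, ?_⟩
      · intro y
        show u (m n) η (hηle n) (φ η y) ∈ C0
        have h3 : u (m n) η (hηle n) (φ η y) = φ (m n) y := congrFun (hφ (m n) η (hηle n)) y
        rw [h3]
        exact hFC0 ⟨y, rfl⟩
      · intro z hz
        apply hWsub n
        show z.1 (m n) ∈ W n
        rw [← z.2 (m n) η (hηle n)]
        exact hC0W hz
    choose C hC hCmem hCsub using hCn
    set D : Set ((U η).carrier) := ⋂ n, C n with hD
    have hD_closed : IsClosed D := isClosed_iInter fun n => (hC n).1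
    haveI : CompactSpace ↥D := isCompact_iff_compactSpace.mp hD_closed.isCompact
    have hYzd : ZeroDim ((U η).carrier ⊕ ↥D) := zeroDim_of_td
    let Y : CMZ := ⟨(U η).carrier ⊕ ↥D, inferInstance, inferInstance, inferInstance, hYzd⟩
    let ψ : K → Y.carrier := fun x => Sum.inr ⟨φ η x, Set.mem_iInter.mpr fun n => hCmem n x⟩
    let q : Y.carrier → (U η).carrier := Sum.elim id Subtype.val
    obtain ⟨β, hηβ, g, hg_cont, hg_surj, hqg, hgφ⟩ :=
      hfraisseA η Y ψ
        (continuous_inr.comp (Continuous.subtype_mk (hφ_cont η)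
          (fun x => Set.mem_iInter.mpr fun n => hCmem n x)))
        q (continuous_id.sumElim continuous_subtype_val)
        (fun y => ⟨Sum.inl y, rfl⟩) rfl
    have hWf_open : IsOpen (g ⁻¹' (Set.range Sum.inr)) :=
      (isClopen_range_inr.preimage hg_cont).2
    have hsub : {z : L | g (z.1 β) ∈ Set.range Sum.inr} ⊆ ⋂ n, V n := by
      intro z hz
      rcases hz with ⟨d, hd⟩
      have hzη : z.1 η = d.1 := by
        have h2 : q (g (z.1 β)) = u η β hηβ (z.1 β) := congrFun hqg (z.1 β)
        rw [← z.2 η β hηβ, ← h2, ← hd]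
        rfl
      refine Set.mem_iInter.mpr fun n => hCsub n ?_
      show z.1 η ∈ C n
      rw [hzη]
      exact Set.mem_iInter.mp d.2 n
    have hopen : IsOpen {z : L | g (z.1 β) ∈ Set.range Sum.inr} :=
      hWf_open.preimage (hπ_cont β)
    intro p hp
    apply interior_maximal hsub hopen
    rcases hp with ⟨x, rfl⟩
    show g (φ β x) ∈ Set.range Sum.inr
    have h3 : g (φ β x) = ψ x := congrFun hgφ x
    rw [h3]
    exact ⟨_, rfl⟩
  exact ⟨hclosed, hND, hPSet⟩
end

section
/- Let κ and λ be infinite regular cardinals with λ ≤ κ and let (K,u) be a λ-ultrametric space of weight at most κ. Let X, Y, Z be discrete sets, each of cardinality at most |κ^γ| for some γ < λ, let f : K → X, g : K → Y be uniformly continuous maps (with respect to u, where a map into a discrete set is uniformly continuous iff there is δ < λ such that it is constant on every closed ball B_δ(a)), and let q₁ : X → Z, q₂ : Y → Z be surjections with q₁ ∘ f = q₂ ∘ g. Then the pullback W = {(x,y) ∈ X × Y : q₁(x) = q₂(y)}, with coordinate projections f₁ : W → X and g₁ : W → Y, is a discrete set of cardinality at most |κ^γ'| for some γ' < λ, f₁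 and g₁ are surjections with q₁ ∘ f₁ = q₂ ∘ g₁, and there is a uniformly continuous map k : K → W with f = f₁ ∘ k and g = g₁ ∘ k. -/
open Set Function

universe u v

/-- The closed ball of radius `α` and center `x` in an ordinal-valued ultrametric space:
`B_α(x) = {y | u x y ≥ α}`. -/
def Ball {X : Type u} (u : X → X → Ordinal) (α : Ordinal) (x : X) : Set X :=
  {y | α ≤ u x y}

/-- `u` is a `γ`-ultrametric on `X`: it takes values in `γ + 1` (i.e. values `≤ γ`),
`u x y = γ` iff `x = y`, the ultrametric triangle law, and symmetry. -/
structure IsUltrametric {X : Type u} (γ : Ordinal) (u : X → X → Ordinal) : Prop where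
  le_gamma : ∀ x y, u x y ≤ γ
  eq_gamma_iff : ∀ x y, u x y = γ ↔ x = y
  triangle : ∀ x y z, min (u y x) (u x z) ≤ u y z
  symm : ∀ x y, u x y = u y x

/-- The topology induced by a `γ`-ultrametric: the closed balls `B_α(x)`, `α < γ`,
form a base. -/
def ballTopology {X : Type u} (γ : Ordinal) (u : X → X → Ordinal) : TopologicalSpace X :=
  TopologicalSpace.generateFrom {s : Set X | ∃ x α, α < γ ∧ s = Ball u α x}

/-- `f` is uniformly continuous from the `γX`-ultrametric space `(X, u)` to the
`γY`-ultrametric space `(Y, d)`. -/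
def UnifCont {X : Type u} {Y : Type v} (γX γY : Ordinal)
    (u : X → X → Ordinal) (d : Y → Y → Ordinal) (f : X → Y) : Prop :=
  ∀ ε < γY, ∃ δ < γX, ∀ a b, δ ≤ u a b → ε ≤ d (f a) (f b)

/-- A discrete set regarded as a `γ`-ultrametric space. -/
noncomputable def discreteUltra {X : Type u} (γ : Ordinal) (a b : X) : Ordinal :=
  @ite _ (a = b) (Classical.propDecidable _) γ 0

/-- `A` is uniformly nowhere dense in the `γ`-ultrametric space `(X, u)`. -/
def UnifNwd {X : Type u} (γ : Ordinal) (u : X → X → Ordinal) (A : Set X) : Prop :=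
  ∀ α < γ, ∃ β, α < β ∧ β < γ ∧ ∀ b : X, ∃ a ∈ Ball u α b, Ball u β a ∩ A = ∅

/-- The space `κ^λ` of functions from (the ordinals below) `λ` to (the ordinals below) `κ`. -/
def funSpace (κ lam : Cardinal.{0}) : Type 1 :=
  ↥(Set.Iio lam.ord) → ↥(Set.Iio κ.ord)

/-- The canonical `λ`-ultrametric on `κ^λ`: `u(a,b) = sup {α < λ : a↾α = b↾α}`. -/
noncomputable def funUltra (κ lam : Cardinal.{0}) (a b : funSpace κ lam) : Ordinal :=
  sSup {α : Ordinal | α < lam.ord ∧ ∀ β : ↥(Set.Iio lam.ord), (β : Ordinal) < α → a β = b β}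

noncomputable instance (κ lam : Cardinal.{0}) : TopologicalSpace (funSpace κ lam) :=
  ballTopology lam.ord (funUltra κ lam)

/-- The space `X` with topology `t` has weight (least cardinality of a base) at most `c`. -/
def WeightLE (X : Type u) (t : TopologicalSpace X) (c : Cardinal.{0}) : Prop :=
  ∃ B : Set (Set X), t.IsTopologicalBasis B ∧ Cardinal.mk B ≤ Cardinal.lift.{u} c

theorem stmt10 (κ lam : Cardinal.{0}) (hκ : κ.IsRegular) (hlam : lam.IsRegular)
    (hle : lam ≤ κ)
    (K : Type u) (uK : K → K → Ordinal) (hu : IsUltrametric lam.ord uK)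
    (hwK : WeightLE K (ballTopology lam.ord uK) κ)
    (X Y Z : Type v)
    (hX : ∃ γ < lam.ord, Cardinal.mk X ≤ Cardinal.lift.{v} (κ ^ γ.card))
    (hY : ∃ γ < lam.ord, Cardinal.mk Y ≤ Cardinal.lift.{v} (κ ^ γ.card))
    (hZ : ∃ γ < lam.ord, Cardinal.mk Z ≤ Cardinal.lift.{v} (κ ^ γ.card))
    (f : K → X) (g : K → Y)
    -- `f`, `g` are uniformly continuous into the discrete sets `X`, `Y`:
    -- there is `δ < λ` such that they are constant on every closed ball `B_δ(a)`
    (hf : ∃ δ < lam.ord, ∀ a b, δ ≤ uK a b → f a = f b)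
    (hg : ∃ δ < lam.ord, ∀ a b, δ ≤ uK a b → g a = g b)
    (q₁ : X → Z) (q₂ : Y → Z) (hq₁ : Surjective q₁) (hq₂ : Surjective q₂)
    (hcomm : q₁ ∘ f = q₂ ∘ g) :
    -- the pullback `W` is a discrete set of cardinality at most `|κ^γ'|` for some `γ' < λ`
    (∃ γ' < lam.ord,
      Cardinal.mk {p : X × Y // q₁ p.1 = q₂ p.2} ≤ Cardinal.lift.{v} (κ ^ γ'.card)) ∧
    -- the coordinate projections are surjective and commute with `q₁`, `q₂`
    Surjective (fun w : {p : X × Y // q₁ p.1 = q₂ p.2} => w.1.1) ∧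
    Surjective (fun w : {p : X × Y // q₁ p.1 = q₂ p.2} => w.1.2) ∧
    (∀ w : {p : X × Y // q₁ p.1 = q₂ p.2}, q₁ w.1.1 = q₂ w.1.2) ∧
    -- and there is a uniformly continuous `k : K → W` with `f = f₁ ∘ k`, `g = g₁ ∘ k`
    (∃ k : K → {p : X × Y // q₁ p.1 = q₂ p.2},
      (∃ δ < lam.ord, ∀ a b, δ ≤ uK a b → k a = k b) ∧
      (∀ a, ((k a : X × Y).1 = f a)) ∧ (∀ a, ((k a : X × Y).2 = g a))) := by
  obtain ⟨γ₁, hγ₁, hX'⟩ := hX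
  obtain ⟨γ₂, hγ₂, hY'⟩ := hY
  obtain ⟨δ₁, hδ₁, hf'⟩ := hf
  obtain ⟨δ₂, hδ₂, hg'⟩ := hg
  refine ⟨⟨γ₁ + γ₂, ?_, ?_⟩, ?_, ?_, fun w => w.2, ?_⟩
  · rw [Cardinal.lt_ord, Ordinal.card_add]
    exact Cardinal.add_lt_of_lt hlam.aleph0_le (Cardinal.lt_ord.mp hγ₁)
      (Cardinal.lt_ord.mp hγ₂)
  · calc Cardinal.mk {p : X × Y // q₁ p.1 = q₂ p.2}
        ≤ Cardinal.mk (X × Y) := Cardinal.mk_subtype_le _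
      _ = Cardinal.mk X * Cardinal.mk Y := by
          rw [Cardinal.mk_prod, Cardinal.lift_id, Cardinal.lift_id]
      _ ≤ Cardinal.lift.{v} (κ ^ γ₁.card) * Cardinal.lift.{v} (κ ^ γ₂.card) :=
          mul_le_mul' hX' hY'
      _ = Cardinal.lift.{v} (κ ^ (γ₁ + γ₂).card) := by
          rw [← Cardinal.lift_mul, Ordinal.card_add, Cardinal.power_add]
  · intro x
    obtain ⟨y, hy⟩ := hq₂ (q₁ x)
    exact ⟨⟨(x, y), hy.symm⟩, rfl⟩
  · intro y
    obtain ⟨x, hx⟩ := hq₁ (q₂ y)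
    exact ⟨⟨(x, y), hx⟩, rfl⟩
  · refine ⟨fun a => ⟨(f a, g a), congrFun hcomm a⟩, ⟨max δ₁ δ₂, max_lt hδ₁ hδ₂,
      fun a b h => ?_⟩, fun a => rfl, fun a => rfl⟩
    exact Subtype.ext (Prod.ext (hf' a b ((le_max_left _ _).trans h))
      (hg' a b ((le_max_right _ _).trans h)))
end

section
/- Let κ and λ be infinite regular cardinals with λ ≤ κ. Then every λ-ultrametric space (K,u) of weight at most κ can be uniformly embedded into κ^λ in such a way that its image is a uniformly nowhere dense subset of κ^λ. -/
open Set Function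

universe u v

-- auxiliary lemmas
lemma le_funUltra_aux (κ lam : Cardinal.{0}) (a b : funSpace κ lam) (γ : Ordinal)
    (hγ : γ < lam.ord) (h : ∀ β : ↥(Set.Iio lam.ord), (β : Ordinal) < γ → a β = b β) :
    γ ≤ funUltra κ lam a b :=
  le_csSup ⟨lam.ord, fun _ hx => hx.1.le⟩ ⟨hγ, h⟩

lemma funUltra_le_aux (κ lam : Cardinal.{0}) (a b : funSpace κ lam)
    (β0 : ↥(Set.Iio lam.ord)) (h : a β0 ≠ b β0) : funUltra κ lam a b ≤ (β0 : Ordinal) := by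
  apply csSup_le'
  rintro x ⟨hx1, hx2⟩
  by_contra hlt
  push_neg at hlt
  exact h (hx2 β0 hlt)

lemma succ_lt_aux {Λ x : Ordinal} (h : Order.IsSuccLimit Λ) (hx : x < Λ) : x + 1 < Λ := by
  rw [Ordinal.add_one_eq_succ]; exact h.succ_lt hx

lemma lt_add_one_aux (x : Ordinal) : x < x + 1 := by
  rw [Ordinal.add_one_eq_succ]; exact Order.lt_succ x

theorem stmt11 (κ lam : Cardinal.{0}) (hκ : κ.IsRegular) (hlam : lam.IsRegular)
    (hle : lam ≤ κ)
    (K : Type u) (uK : K → K → Ordinal) (hu : IsUltrametric lam.ord uK)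
    (hw : WeightLE K (ballTopology lam.ord uK) κ) :
    ∃ η : K → funSpace κ lam,
      -- `η` is a uniform embedding ...
      Injective η ∧
      UnifCont lam.ord lam.ord uK (funUltra κ lam) η ∧
      (∀ ε < lam.ord, ∃ δ < lam.ord, ∀ a b : K,
        δ ≤ funUltra κ lam (η a) (η b) → ε ≤ uK a b) ∧
      -- ... whose image is uniformly nowhere dense in `κ^λ`
      UnifNwd lam.ord (funUltra κ lam) (Set.range η) := by
  classical
  obtain ⟨B, hB, hBcard⟩ := hw
  letI : TopologicalSpace K := ballTopology lam.ord uK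
  have hΛlim : Order.IsSuccLimit lam.ord := Cardinal.isSuccLimit_ord hlam.aleph0_le
  -- basic ball facts
  have hself : ∀ x : K, uK x x = lam.ord := fun x => (hu.eq_gamma_iff x x).mpr rfl
  have hball : ∀ (α : Ordinal) (a b : K), α ≤ uK a b → Ball uK α a = Ball uK α b := by
    intro α a b hab
    ext y
    constructor
    · intro hy
      have := hu.triangle a b y
      rw [hu.symm b a] at this
      exact le_trans (le_min hab hy) this
    · intro hy
      have := hu.triangle b a y
      exact le_trans (le_min hab hy) this
  have hball2 : ∀ (α : Ordinal), α ≤ lam.ord → ∀ a b : K,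
      Ball uK α a = Ball uK α b → α ≤ uK a b := by
    intro α hα a b h
    have hb : b ∈ Ball uK α b := by
      show α ≤ uK b b
      rw [hself b]; exact hα
    rw [← h] at hb
    exact hb
  -- the reserved value 1
  have h1 : (1 : Ordinal) < κ.ord :=
    lt_of_lt_of_le Ordinal.one_lt_omega0 (by rw [← Cardinal.ord_aleph0]; exact Cardinal.ord_le_ord.mpr hκ.aleph0_le)
  set v1 : ↥(Set.Iio κ.ord) := ⟨1, h1⟩ with hv1
  set T : Set ↥(Set.Iio κ.ord) := {v1}ᶜ with hTdef
  have hmkI : (Cardinal.mk ↥(Set.Iio κ.ord)) = Cardinal.lift.{1} κ := by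
    rw [Ordinal.mk_Iio_ordinal, Cardinal.card_ord]
  haveI hinf : Infinite ↥(Set.Iio κ.ord) := by
    rw [Cardinal.infinite_iff, hmkI]
    exact Cardinal.aleph0_le_lift.mpr hκ.aleph0_le
  have hT : Cardinal.mk ↥T = Cardinal.lift.{1} κ := by
    rw [hTdef, Cardinal.mk_compl_of_infinite, hmkI]
    rw [Cardinal.mk_singleton, hmkI]
    exact lt_of_lt_of_le Cardinal.one_lt_aleph0 (Cardinal.aleph0_le_lift.mpr hκ.aleph0_le)
  -- injections from the balls of radius α into the base
  have hinj : ∀ α : ↥(Set.Iio lam.ord),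
      ∃ f : ↥(Set.range (Ball uK (α : Ordinal))) → ↥B, Injective f := by
    rintro ⟨α, hα⟩
    have hsel : ∀ s : ↥(Set.range (Ball uK α)), ∃ v, v ∈ B ∧
        ∃ x, s.1 = Ball uK α x ∧ x ∈ v ∧ v ⊆ s.1 := by
      rintro ⟨s, x, hx⟩
      have hxs : x ∈ s := by
        rw [← hx]
        show α ≤ uK x x
        rw [hself x]; exact hα.le
      have hopen : IsOpen s := by
        rw [← hx]
        exact TopologicalSpace.isOpen_generateFrom_of_mem ⟨x, α, hα, rfl⟩
      obtain ⟨v, hvB, hxv, hvs⟩ := hB.exists_subset_of_mem_open hxs hopen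
      exact ⟨v, hvB, x, hx.symm, hxv, hvs⟩
    choose v hvB x hsx hxv hvs using hsel
    refine ⟨fun s => ⟨v s, hvB s⟩, fun s1 s2 h => ?_⟩
    have hveq : v s1 = v s2 := congrArg Subtype.val h
    have hx1 : x s1 ∈ s2.1 := hvs s2 (hveq ▸ hxv s1)
    rw [hsx s2] at hx1
    have hle : α ≤ uK (x s2) (x s1) := hx1
    have : Ball uK α (x s1) = Ball uK α (x s2) := by
      rw [hu.symm] at hle
      exact hball α (x s1) (x s2) hle
    exact Subtype.ext (by rw [hsx s1, hsx s2, this])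
  -- embeddings into T
  have hemb : ∀ α : ↥(Set.Iio lam.ord),
      Nonempty (↥(Set.range (Ball uK (α : Ordinal))) ↪ ↥T) := by
    intro α
    obtain ⟨f, hf⟩ := hinj α
    have h1' : Cardinal.mk ↥(Set.range (Ball uK (α : Ordinal))) ≤ Cardinal.lift.{u} κ :=
      le_trans (Cardinal.mk_le_of_injective hf) hBcard
    refine Cardinal.lift_mk_le'.mp ?_
    calc Cardinal.lift.{1} (Cardinal.mk ↥(Set.range (Ball uK (α : Ordinal))))
        ≤ Cardinal.lift.{1} (Cardinal.lift.{u} κ) := Cardinal.lift_le.mpr h1'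
      _ = Cardinal.lift.{u} (Cardinal.lift.{1} κ) := by
          rw [Cardinal.lift_lift, Cardinal.lift_lift]
      _ = Cardinal.lift.{u} (Cardinal.mk ↥T) := by rw [hT]
  have E : ∀ α : ↥(Set.Iio lam.ord), ↥(Set.range (Ball uK (α : Ordinal))) ↪ ↥T :=
    fun α => (hemb α).some
  set η : K → funSpace κ lam :=
    fun a β => ((E β) ⟨Ball uK (β : Ordinal) a, Set.mem_range_self a⟩ : ↥(Set.Iio κ.ord)) with hη
  have hne1 : ∀ (a : K) (β : ↥(Set.Iio lam.ord)), η a β ≠ v1 := by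
    intro a β
    exact ((E β) ⟨Ball uK (β : Ordinal) a, Set.mem_range_self a⟩).2
  have hcoord : ∀ (a b : K) (β : ↥(Set.Iio lam.ord)),
      η a β = η b β ↔ (β : Ordinal) ≤ uK a b := by
    intro a b β
    constructor
    · intro h
      have h2 := (E β).injective (Subtype.ext h)
      have h3 : Ball uK (β : Ordinal) a = Ball uK (β : Ordinal) b :=
        congrArg Subtype.val h2
      exact hball2 (β : Ordinal) β.2.le a b h3
    · intro h
      have : Ball uK (β : Ordinal) a = Ball uK (β : Ordinal) b := hball _ a b h
      show (((E β) ⟨Ball uK (β : Ordinal) a, Set.mem_range_self a⟩ : ↥T) : ↥(Set.Iio κ.ord))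
        = (((E β) ⟨Ball uK (β : Ordinal) b, Set.mem_range_self b⟩ : ↥T) : ↥(Set.Iio κ.ord))
      congr 2
      exact Subtype.ext this
  have hμlt : ∀ a b : K, a ≠ b → uK a b < lam.ord := fun a b hne =>
    lt_of_le_of_ne (hu.le_gamma a b) (fun h => hne ((hu.eq_gamma_iff a b).mp h))
  refine ⟨η, ?_, ?_, ?_, ?_⟩
  · -- injective
    intro a b h
    by_contra hne
    have hμ := hμlt a b hne
    set β0 : ↥(Set.Iio lam.ord) := ⟨uK a b + 1, succ_lt_aux hΛlim hμ⟩
    have := (hcoord a b β0).mp (congrFun h β0)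
    exact absurd this (not_le.mpr (lt_add_one_aux _))
  · -- uniformly continuous
    intro ε hε
    refine ⟨ε, hε, fun a b hab => ?_⟩
    apply le_funUltra_aux κ lam _ _ ε hε
    intro β hβ
    exact (hcoord a b β).mpr (hβ.le.trans hab)
  · -- inverse uniformly continuous
    intro ε hε
    refine ⟨ε + 1, succ_lt_aux hΛlim hε, fun a b h => ?_⟩
    by_cases hab : a = b
    · subst hab; rw [hself a]; exact hε.le
    · have hμ := hμlt a b hab
      set β0 : ↥(Set.Iio lam.ord) := ⟨uK a b + 1, succ_lt_aux hΛlim hμ⟩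
      have hne : η a β0 ≠ η b β0 := by
        intro hcon
        exact absurd ((hcoord a b β0).mp hcon) (not_le.mpr (lt_add_one_aux _))
      have hle : funUltra κ lam (η a) (η b) ≤ uK a b + 1 :=
        funUltra_le_aux κ lam _ _ β0 hne
      have : ε + 1 ≤ uK a b + 1 := le_trans h hle
      rwa [Ordinal.add_one_eq_succ, Ordinal.add_one_eq_succ, Order.succ_le_succ_iff] at this
  · -- uniformly nowhere dense image
    intro α hα
    refine ⟨α + 1, lt_add_one_aux α, succ_lt_aux hΛlim hα, fun b => ?_⟩
    set a : funSpace κ lam := fun γ => if (γ : Ordinal) = α then v1 else b γ with ha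
    refine ⟨a, ?_, ?_⟩
    · show α ≤ funUltra κ lam b a
      apply le_funUltra_aux κ lam _ _ α hα
      intro β hβ
      show b β = if (β : Ordinal) = α then v1 else b β
      rw [if_neg (ne_of_lt hβ)]
    · rw [Set.eq_empty_iff_forall_notMem]
      rintro c ⟨hc, x, rfl⟩
      have hc' : α + 1 ≤ funUltra κ lam a (η x) := hc
      set β0 : ↥(Set.Iio lam.ord) := ⟨α, hα⟩
      have haβ : a β0 = v1 := if_pos rfl
      have hne : a β0 ≠ η x β0 := by
        rw [haβ]
        exact fun hcon => hne1 x β0 hcon.symm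
      have := funUltra_le_aux κ lam a (η x) β0 hne
      exact absurd (le_trans hc' this) (not_le.mpr (lt_add_one_aux α))
end

section
/- Let κ and λ be infinite regular cardinals with λ ≤ κ, and let η : K → κ^λ be a uniform embedding of a λ-ultrametric space K such that η[K] has weight at most κ and is uniformly nowhere dense in κ^λ. Then for all discrete sets X and Y with |X| ≤ |κ^{δ₀}| and |Y| ≤ |κ^{δ₁}| for some δ₀ ≤ δ₁ < λ, every surjection f : Y → X, every uniformly continuous map b : K → Y, and every uniformly continuous surjection g : κ^λ → X satisfying g ∘ η = f ∘ b, there exists a uniformly continuous surjection h : κ^λ → Y such that f ∘ h = g and h ∘ η = b. -/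
open Set Function

universe u v

section aux
variable {κ lam : Cardinal.{0}} (hlam0 : (0:Ordinal) < lam.ord)
variable {a b c : funSpace κ lam}

lemma fu_bdd : BddAbove {α : Ordinal | α < lam.ord ∧ ∀ β : ↥(Set.Iio lam.ord), (β : Ordinal) < α → a β = b β} :=
  ⟨lam.ord, fun _ hx => le_of_lt hx.1⟩

include hlam0 in
lemma fu_nonempty : Set.Nonempty {α : Ordinal | α < lam.ord ∧ ∀ β : ↥(Set.Iio lam.ord), (β : Ordinal) < α → a β = b β} :=
  ⟨0, hlam0, fun _ hβ => absurd hβ (not_lt_of_ge (zero_le))⟩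

lemma fu_le_ord : funUltra κ lam a b ≤ lam.ord :=
  csSup_le' fun _ hx => le_of_lt hx.1

include hlam0 in
lemma fu_agree {β : ↥(Set.Iio lam.ord)} (h : (β:Ordinal) < funUltra κ lam a b) : a β = b β := by
  obtain ⟨α, hα, hβα⟩ := exists_lt_of_lt_csSup (fu_nonempty hlam0) h
  exact hα.2 β hβα

lemma fu_ge (hlim : Order.IsSuccLimit lam.ord) {γ : Ordinal} (hγ : γ ≤ lam.ord)
    (h : ∀ β : ↥(Set.Iio lam.ord), (β:Ordinal) < γ → a β = b β) : γ ≤ funUltra κ lam a b := by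
  rcases lt_or_eq_of_le hγ with hγ' | rfl
  · exact le_csSup fu_bdd ⟨hγ', h⟩
  · refine le_of_forall_lt fun ξ hξ => ?_
    have h1 : ξ + 1 < lam.ord := by rw [Ordinal.add_one_eq_succ]; exact hlim.succ_lt hξ
    have : ξ + 1 ≤ funUltra κ lam a b :=
      le_csSup fu_bdd ⟨h1, fun β hβ => h β (hβ.trans_le h1.le)⟩
    exact lt_of_lt_of_le (Order.lt_succ ξ) (by simpa using this)

lemma fu_self (hlim : Order.IsSuccLimit lam.ord) : funUltra κ lam a a = lam.ord :=
  le_antisymm fu_le_ord (fu_ge hlim le_rfl fun _ _ => rfl)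

lemma fu_symm : funUltra κ lam a b = funUltra κ lam b a := by
  unfold funUltra; congr 1; ext α
  exact and_congr_right fun _ => ⟨fun h β hβ => (h β hβ).symm, fun h β hβ => (h β hβ).symm⟩

include hlam0 in
lemma fu_trans (hlim : Order.IsSuccLimit lam.ord) {γ : Ordinal} (h1 : γ ≤ funUltra κ lam a b)
    (h2 : γ ≤ funUltra κ lam b c) : γ ≤ funUltra κ lam a c := by
  refine fu_ge hlim (h1.trans fu_le_ord) fun β hβ => ?_
  exact (fu_agree hlam0 (hβ.trans_le h1)).trans (fu_agree hlam0 (hβ.trans_le h2))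

end aux

theorem stmt12 (κ lam : Cardinal.{0}) (hκ : κ.IsRegular) (hlam : lam.IsRegular)
    (hle : lam ≤ κ)
    (K : Type u) (uK : K → K → Ordinal) (hu : IsUltrametric lam.ord uK)
    -- `η : K → κ^λ` is a uniform embedding
    (η : K → funSpace κ lam) (hinj : Injective η)
    (hηu : UnifCont lam.ord lam.ord uK (funUltra κ lam) η)
    (hηinv : ∀ ε < lam.ord, ∃ δ < lam.ord, ∀ a b : K,
      δ ≤ funUltra κ lam (η a) (η b) → ε ≤ uK a b)
    -- whose image has weight at most `κ` and is uniformly nowhere dense in `κ^λ`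
    (hwr : WeightLE ↥(Set.range η) instTopologicalSpaceSubtype κ)
    (hnwd : UnifNwd lam.ord (funUltra κ lam) (Set.range η))
    -- discrete sets `X`, `Y` with `|X| ≤ |κ^{δ₀}|`, `|Y| ≤ |κ^{δ₁}|`, `δ₀ ≤ δ₁ < λ`
    (X Y : Type v) (δ₀ δ₁ : Ordinal) (hδ : δ₀ ≤ δ₁) (hδ₁ : δ₁ < lam.ord)
    (hX : Cardinal.mk X ≤ Cardinal.lift.{v} (κ ^ δ₀.card))
    (hY : Cardinal.mk Y ≤ Cardinal.lift.{v} (κ ^ δ₁.card))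
    (f : Y → X) (hf : Surjective f)
    (b : K → Y) (hb : UnifCont lam.ord lam.ord uK (discreteUltra lam.ord) b)
    (g : funSpace κ lam → X) (hgs : Surjective g)
    (hg : UnifCont lam.ord lam.ord (funUltra κ lam) (discreteUltra lam.ord) g)
    (hcomm : g ∘ η = f ∘ b) :
    ∃ h : funSpace κ lam → Y, Surjective h ∧
      UnifCont lam.ord lam.ord (funUltra κ lam) (discreteUltra lam.ord) h ∧
      f ∘ h = g ∧ h ∘ η = b := by
  classical
  have hlim : Order.IsSuccLimit lam.ord := Cardinal.isSuccLimit_ord hlam.aleph0_le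
  have hlam0 : (0:Ordinal) < lam.ord := hlim.pos
  have h1lam : (1:Ordinal) < lam.ord := Ordinal.one_lt_of_isSuccLimit hlim
  -- g is constant on δg-balls
  obtain ⟨δg, hδg, hgc'⟩ := hg 1 h1lam
  have hgc : ∀ z w, δg ≤ funUltra κ lam z w → g z = g w := by
    intro z w hzw
    have h2 := hgc' z w hzw
    by_contra hne
    simp [discreteUltra, hne] at h2
  -- b is constant on δ'-balls (pulled through η)
  obtain ⟨δb, hδb, hbc'⟩ := hb 1 h1lam
  obtain ⟨δ', hδ', hinv⟩ := hηinv δb hδb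
  have hbc : ∀ k k', δ' ≤ funUltra κ lam (η k) (η k') → b k = b k' := by
    intro k k' hkk
    have h2 := hbc' k k' (hinv k k' hkk)
    by_contra hne
    simp [discreteUltra, hne] at h2
  set α := max δg δ' with hαdef
  have hα : α < lam.ord := max_lt hδg hδ'
  obtain ⟨β, hαβ, hβ, hnb⟩ := hnwd α hα
  set β' := β + δ₁ with hβ'def
  have hβ' : β' < lam.ord := by
    rw [hβ'def, Cardinal.lt_ord, Ordinal.card_add]
    exact Cardinal.add_lt_of_lt hlam.aleph0_le (Cardinal.lt_ord.1 hβ) (Cardinal.lt_ord.1 hδ₁)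
  have hδgβ : δg ≤ β := le_of_lt (lt_of_le_of_lt (le_max_left _ _) hαβ)
  have hδ'β : δ' ≤ β := le_of_lt (lt_of_le_of_lt (le_max_right _ _) hαβ)
  have hββ' : β ≤ β' := le_self_add
  -- for each x : X pick a point whose β-ball avoids range η and maps to x under g
  have hax : ∀ x : X, ∃ aa : funSpace κ lam,
      g aa = x ∧ Ball (funUltra κ lam) β aa ∩ Set.range η = ∅ := by
    intro x
    obtain ⟨z, hz⟩ := hgs x
    obtain ⟨aa, haa, hdis⟩ := hnb z
    exact ⟨aa, ((hgc z aa (le_trans (le_max_left _ _) haa)).symm).trans hz, hdis⟩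
  choose A hA hAdis using hax
  -- an injection coding Y into sequences of length δ₁
  obtain ⟨e⟩ : Nonempty (Y ↪ (↥(Set.Iio δ₁) → ↥(Set.Iio κ.ord))) := by
    rw [← Cardinal.lift_mk_le']
    have h1 : (Cardinal.mk (↥(Set.Iio δ₁) → ↥(Set.Iio κ.ord)) : Cardinal.{1})
        = Cardinal.lift.{1} (κ ^ δ₁.card) := by
      rw [← Cardinal.power_def, Ordinal.mk_Iio_ordinal, Ordinal.mk_Iio_ordinal,
        Cardinal.card_ord, ← Cardinal.lift_power]
    rw [h1]
    calc Cardinal.lift.{1} (Cardinal.mk Y)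
        ≤ Cardinal.lift.{1} (Cardinal.lift.{v} (κ ^ δ₁.card)) := Cardinal.lift_le.2 hY
      _ = Cardinal.lift.{v} (Cardinal.lift.{1} (κ ^ δ₁.card)) := by
          rw [Cardinal.lift_lift, Cardinal.lift_lift]
  have hcoordβ : ∀ i : ↥(Set.Iio δ₁), β + (i:Ordinal) < lam.ord := fun i =>
    lt_of_lt_of_le ((add_lt_add_iff_left β).2 i.2) (le_of_eq (by rw [hβ'def]) |>.trans hβ'.le)
  -- the points p y
  set p : Y → funSpace κ lam := fun y γ =>
    if (γ:Ordinal) < β then A (f y) γ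
    else if h2 : (γ:Ordinal) - β < δ₁ then e y ⟨(γ:Ordinal) - β, h2⟩
    else A (f y) γ with hpdef
  have hpa : ∀ y, β ≤ funUltra κ lam (A (f y)) (p y) := by
    intro y
    refine fu_ge hlim hβ.le fun γ hγ => ?_
    simp only [hpdef, if_pos hγ]
  have hpcode : ∀ (y : Y) (i : ↥(Set.Iio δ₁)), p y ⟨β + (i:Ordinal), hcoordβ i⟩ = e y i := by
    intro y i
    have hsub : (β + (i:Ordinal)) - β = (i:Ordinal) := Ordinal.add_sub_cancel β i
    simp only [hpdef, if_neg (not_lt.2 (le_self_add (a := β) (b := (i:Ordinal))))]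
    rw [dif_pos (show (β + (i:Ordinal)) - β < δ₁ by rw [hsub]; exact i.2)]
    exact congrArg (e y) (Subtype.ext hsub)
  have hpinj : ∀ y y', β' ≤ funUltra κ lam (p y) (p y') → y = y' := by
    intro y y' hpp
    apply e.injective; funext i
    have hlt : β + (i:Ordinal) < β' := by rw [hβ'def]; exact (add_lt_add_iff_left β).2 i.2
    have h2 := fu_agree hlam0 (show ((⟨β + (i:Ordinal), hcoordβ i⟩ : ↥(Set.Iio lam.ord)) : Ordinal)
      < funUltra κ lam (p y) (p y') from lt_of_lt_of_le hlt hpp)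
    rwa [hpcode, hpcode] at h2
  -- the map h
  set h : funSpace κ lam → Y := fun z =>
    if hz : ∃ k, β ≤ funUltra κ lam z (η k) then b hz.choose
    else if hz2 : ∃ y, β' ≤ funUltra κ lam (p y) z then hz2.choose
    else surjInv hf (g z) with hhdef
  -- case facts
  have hcase1 : ∀ z (hz : ∃ k, β ≤ funUltra κ lam z (η k)), h z = b hz.choose := by
    intro z hz; simp only [hhdef, dif_pos hz]
  have hcase2 : ∀ z (hz : ¬ ∃ k, β ≤ funUltra κ lam z (η k))
      (hz2 : ∃ y, β' ≤ funUltra κ lam (p y) z), h z = hz2.choose := by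
    intro z hz hz2; simp only [hhdef, dif_neg hz, dif_pos hz2]
  have hcase3 : ∀ z (hz : ¬ ∃ k, β ≤ funUltra κ lam z (η k))
      (hz2 : ¬ ∃ y, β' ≤ funUltra κ lam (p y) z), h z = surjInv hf (g z) := by
    intro z hz hz2; simp only [hhdef, dif_neg hz, dif_neg hz2]
  -- p y is never β-close to range η
  have hpfar : ∀ y, ¬ ∃ k, β ≤ funUltra κ lam (p y) (η k) := by
    rintro y ⟨k, hk⟩
    have h1 : β ≤ funUltra κ lam (A (f y)) (η k) := fu_trans hlam0 hlim (hpa y) hk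
    have h2 : η k ∈ Ball (funUltra κ lam) β (A (f y)) ∩ Set.range η := ⟨h1, ⟨k, rfl⟩⟩
    rw [hAdis (f y)] at h2
    exact h2
  refine ⟨h, ?_, ?_, ?_, ?_⟩
  · -- surjective
    intro y
    refine ⟨p y, ?_⟩
    have hy2 : ∃ y', β' ≤ funUltra κ lam (p y') (p y) :=
      ⟨y, by rw [fu_self hlim]; exact hβ'.le⟩
    rw [hcase2 (p y) (hpfar y) hy2]
    exact hpinj _ _ hy2.choose_spec
  · -- uniformly continuous
    intro ε hε
    refine ⟨β', hβ', fun z w hzw => ?_⟩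
    have hwz : β' ≤ funUltra κ lam w z := by rw [fu_symm]; exact hzw
    have hzwβ : β ≤ funUltra κ lam z w := hββ'.trans hzw
    have hwzβ : β ≤ funUltra κ lam w z := hββ'.trans hwz
    have hval : h z = h w := by
      by_cases h1 : ∃ k, β ≤ funUltra κ lam z (η k)
      · have h2 : ∃ k, β ≤ funUltra κ lam w (η k) :=
          ⟨h1.choose, fu_trans hlam0 hlim hwzβ h1.choose_spec⟩
        rw [hcase1 z h1, hcase1 w h2]
        apply hbc
        have t1 : β ≤ funUltra κ lam (η h1.choose) z := by rw [fu_symm]; exact h1.choose_spec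
        have t2 : β ≤ funUltra κ lam (η h1.choose) w := fu_trans hlam0 hlim t1 hzwβ
        exact hδ'β.trans (fu_trans hlam0 hlim t2 h2.choose_spec)
      · have h2 : ¬ ∃ k, β ≤ funUltra κ lam w (η k) := by
          rintro ⟨k, hk⟩
          exact h1 ⟨k, fu_trans hlam0 hlim hzwβ hk⟩
        by_cases h3 : ∃ y, β' ≤ funUltra κ lam (p y) z
        · have h4 : ∃ y, β' ≤ funUltra κ lam (p y) w :=
            ⟨h3.choose, fu_trans hlam0 hlim h3.choose_spec hzw⟩
          rw [hcase2 z h1 h3, hcase2 w h2 h4]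
          refine hpinj _ _ ?_
          exact fu_trans hlam0 hlim h3.choose_spec
            (fu_trans hlam0 hlim hzw (by rw [fu_symm]; exact h4.choose_spec))
        · have h4 : ¬ ∃ y, β' ≤ funUltra κ lam (p y) w := by
            rintro ⟨y, hy⟩
            exact h3 ⟨y, fu_trans hlam0 hlim hy hwz⟩
          rw [hcase3 z h1 h3, hcase3 w h2 h4, hgc z w (hδgβ.trans hzwβ)]
    rw [hval]
    simp only [discreteUltra, if_pos rfl]
    exact hε.le
  · -- f ∘ h = g
    funext z
    show f (h z) = g z
    by_cases h1 : ∃ k, β ≤ funUltra κ lam z (η k)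
    · rw [hcase1 z h1]
      have h2 : f (b h1.choose) = g (η h1.choose) := (congrFun hcomm h1.choose).symm
      rw [h2]
      exact hgc (η h1.choose) z (by rw [fu_symm]; exact hδgβ.trans h1.choose_spec)
    · by_cases h3 : ∃ y, β' ≤ funUltra κ lam (p y) z
      · rw [hcase2 z h1 h3]
        have h5 : g z = g (p h3.choose) := by
          apply hgc
          rw [fu_symm]
          exact (hδgβ.trans hββ').trans h3.choose_spec
        have h6 : g (p h3.choose) = g (A (f h3.choose)) := by
          apply hgc
          rw [fu_symm]
          exact hδgβ.trans (hpa h3.choose)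
        rw [← hA (f h3.choose)]
        rw [h5, h6]
      · rw [hcase3 z h1 h3]
        exact surjInv_eq hf (g z)
  · -- h ∘ η = b
    funext k
    show h (η k) = b k
    have h1 : ∃ k', β ≤ funUltra κ lam (η k) (η k') :=
      ⟨k, by rw [fu_self hlim]; exact hβ.le⟩
    rw [hcase1 (η k) h1]
    apply hbc
    rw [fu_symm]
    exact hδ'β.trans h1.choose_spec
end

section
/- Let κ be a weakly compact cardinal and endow 2^κ (the set of functions from κ to {0,1}) with the topology induced by the κ-ultrametric u(a,b) = sup{α < κ : a↾α = b↾α}. Then every nowhere dense subset of 2^κ is uniformly nowhere dense. -/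
open Set Function

universe u v

/-- The generalized Cantor space `2^κ` of functions from (the ordinals below) `κ` to `{0,1}`. -/
def cantor (κ : Cardinal.{0}) : Type 1 := ↥(Set.Iio κ.ord) → Bool

/-- The canonical `κ`-ultrametric on `2^κ`: `u(a,b) = sup {α < κ : a↾α = b↾α}`. -/
noncomputable def cantorUltra (κ : Cardinal.{0}) (a b : cantor κ) : Ordinal :=
  sSup {α : Ordinal | α < κ.ord ∧ ∀ β : ↥(Set.Iio κ.ord), (β : Ordinal) < α → a β = b β}

noncomputable instance (κ : Cardinal.{0}) : TopologicalSpace (cantor κ) :=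
  ballTopology κ.ord (cantorUltra κ)

/-- `κ` is weakly compact: it is uncountable and has the Ramsey property `κ → (κ)²`. -/
def WeaklyCompact (κ : Cardinal.{0}) : Prop :=
  Cardinal.aleph0 < κ ∧
  ∀ f : ↥(Set.Iio κ.ord) → ↥(Set.Iio κ.ord) → Bool,
    ∃ (i : Bool) (A : Set ↥(Set.Iio κ.ord)), Cardinal.mk A = Cardinal.lift.{1} κ ∧
      ∀ a ∈ A, ∀ b ∈ A, a < b → f a b = i

/-- A space is `κ`-compact if every open cover has a subcover of size `< κ`. -/
def KappaCompact (X : Type u) (t : TopologicalSpace X) (κ : Cardinal.{0}) : Prop :=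
  ∀ C : Set (Set X), (∀ s ∈ C, t.IsOpen s) → ⋃₀ C = Set.univ →
    ∃ D ⊆ C, Cardinal.mk D < Cardinal.lift.{u} κ ∧ ⋃₀ D = Set.univ

open Cardinal in
lemma wc_sup_small {κ : Cardinal.{0}} (hκ : WeaklyCompact κ) {ι : Type} (f : ι → Ordinal.{0})
    (hι : #ι < κ) (hf : ∀ i, f i < κ.ord) : ∃ b, b < κ.ord ∧ ∀ i, f i ≤ b := by
  classical
  by_contra hcon
  push_neg at hcon
  have hcon' : ∀ b < κ.ord, ∃ i, b < f i := by
    intro b hb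
    obtain ⟨i, hi⟩ := hcon b hb
    exact ⟨i, hi⟩
  choose g hg using fun x : ↥(Set.Iio κ.ord) => hcon' x x.2
  obtain ⟨i, A, hA, hhom⟩ := hκ.2 (fun x y => decide (f (g x) = f (g y)))
  have hAne : Nonempty ↥A := by
    rw [← Cardinal.mk_ne_zero_iff, hA]
    simp
    exact fun h => (hκ.1.trans_eq h).not_gt aleph0_pos
  obtain ⟨⟨x₀, hx₀⟩⟩ := hAne
  cases i with
  | true =>
    have key : ∀ x ∈ A, (x : Ordinal) < f (g x₀) := by
      intro x hx
      rcases lt_trichotomy x x₀ with h | h | h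
      · have := hhom x hx x₀ hx₀ h
        rw [decide_eq_true_eq] at this
        exact (hg x).trans_eq this
      · subst h; exact hg x
      · have := hhom x₀ hx₀ x hx h
        rw [decide_eq_true_eq] at this
        exact (hg x).trans_eq this.symm
    have hemb : #↥A ≤ #↥(Set.Iio (f (g x₀))) := by
      refine mk_le_of_injective (f := fun z : ↥A => (⟨(z : ↥(Set.Iio κ.ord)), key z z.2⟩ : ↥(Set.Iio (f (g x₀))))) ?_
      intro a b h
      simp only [Subtype.mk.injEq] at h
      exact Subtype.ext (Subtype.ext (Subtype.mk.inj h))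
    rw [hA, Ordinal.mk_Iio_ordinal] at hemb
    have : κ ≤ (f (g x₀)).card := by exact_mod_cast Cardinal.lift_le.mp hemb
    exact this.not_gt (Cardinal.lt_ord.mp (hf (g x₀)))
  | false =>
    have hinj : Function.Injective (fun z : ↥A => g z) := by
      intro a b h
      by_contra hne
      have hne' : (a : ↥(Set.Iio κ.ord)) ≠ b := fun e => hne (Subtype.ext e)
      rcases hne'.lt_or_gt with hlt | hlt
      · have := hhom a a.2 b b.2 hlt
        simp only [decide_eq_false_iff_not] at this
        exact this (congrArg f (by simpa using h))
      · have := hhom b b.2 a a.2 hlt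
        simp only [decide_eq_false_iff_not] at this
        exact this (congrArg f (by simpa using h.symm))
    have : Cardinal.lift.{0} #↥A ≤ Cardinal.lift.{1} #ι := lift_mk_le'.mpr ⟨⟨_, hinj⟩⟩
    rw [hA, Cardinal.lift_lift] at this
    have : κ ≤ #ι := by exact_mod_cast Cardinal.lift_le.mp this
    exact this.not_gt hι

open Cardinal in
lemma wc_sum_small {κ : Cardinal.{0}} (hκ : WeaklyCompact κ) {ι : Type} (g : ι → Cardinal.{0})
    (hι : #ι < κ) (hg : ∀ i, g i < κ) : Cardinal.sum g < κ := by
  obtain ⟨b, hb, hball⟩ := wc_sup_small hκ (fun i => (g i).ord) hι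
    (fun i => Cardinal.ord_lt_ord.mpr (hg i))
  have h1 : ∀ i, g i ≤ b.card := by
    intro i
    have := Ordinal.card_le_card (hball i)
    rwa [Cardinal.card_ord] at this
  calc Cardinal.sum g ≤ Cardinal.sum (fun _ : ι => b.card) := Cardinal.sum_le_sum _ _ h1
    _ = #ι * b.card := Cardinal.sum_const' ι b.card
    _ < κ := Cardinal.mul_lt_of_lt hκ.1.le hι (Cardinal.lt_ord.mp hb)

/-- Lexicographic strict order on `σ → Bool` via an explicit witness. -/
def BLex {σ : Type} [LT σ] (x y : σ → Bool) : Prop :=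
  ∃ i, x i = false ∧ y i = true ∧ ∀ j, j < i → x j = y j

lemma blex_trichotomy {σ : Type} [LinearOrder σ] [WellFoundedLT σ] {x y : σ → Bool}
    (h : x ≠ y) : BLex x y ∨ BLex y x := by
  have hne : {i | x i ≠ y i}.Nonempty := by
    by_contra hc
    exact h (funext fun i => by
      by_contra hne
      exact hc ⟨i, hne⟩)
  obtain ⟨i, hi, hmin⟩ := (IsWellFounded.wf (r := (· < · : σ → σ → Prop))).has_min _ hne
  have hag : ∀ j, j < i → x j = y j := by
    intro j hj
    by_contra hc
    exact hmin j hc hj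
  rcases Bool.eq_false_or_eq_true (x i) with hx | hx
  · right
    refine ⟨i, ?_, hx, fun j hj => (hag j hj).symm⟩
    rcases Bool.eq_false_or_eq_true (y i) with hy | hy
    · exact absurd (hx.trans hy.symm) hi
    · exact hy
  · left
    refine ⟨i, hx, ?_, hag⟩
    rcases Bool.eq_false_or_eq_true (y i) with hy | hy
    · exact hy
    · exact absurd (hx.trans hy.symm) hi

lemma blex_flip {σ : Type} [LT σ] {x y : σ → Bool} (h : BLex y x) :
    BLex (fun j => !(x j)) (fun j => !(y j)) := by
  obtain ⟨i, h1, h2, h3⟩ := h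
  exact ⟨i, by simp [h2], by simp [h1], fun j hj => by simp [h3 j hj]⟩

open Cardinal in
lemma wc_two_power_lt {κ : Cardinal.{0}} (hκ : WeaklyCompact κ) :
    ∀ α : Ordinal.{0}, α < κ.ord → (2 : Cardinal.{0}) ^ α.card < κ := by
  intro α
  induction α using Ordinal.induction with
  | h α IH =>
  intro hα
  by_contra hle
  push_neg at hle
  classical
  have hκ0 : ℵ₀ ≤ κ := hκ.1.le
  set σ := α.ToType with hσdef
  have hmkσ : #σ = α.card := Cardinal.mk_toType α
  have hmkfun : #(σ → Bool) = 2 ^ α.card := by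
    rw [Cardinal.mk_arrow, Cardinal.mk_bool, hmkσ, Cardinal.lift_id, Cardinal.lift_id]
  have hmkIio : #↥(Set.Iio κ.ord) = Cardinal.lift.{1} κ := by
    rw [Ordinal.mk_Iio_ordinal, Cardinal.card_ord]
  have hemb : Nonempty (↥(Set.Iio κ.ord) ↪ (σ → Bool)) := by
    rw [← Cardinal.lift_mk_le', hmkIio, hmkfun, Cardinal.lift_lift]
    exact Cardinal.lift_le.mpr hle
  obtain ⟨φ⟩ := hemb
  obtain ⟨i, A, hA, hhom⟩ := hκ.2 (fun x y => decide (BLex (φ x) (φ y)))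
  set ψ : ↥(Set.Iio κ.ord) → (σ → Bool) :=
    (if i = true then (φ : ↥(Set.Iio κ.ord) → (σ → Bool)) else fun x j => !(φ x j)) with hψdef
  have hψinj : Function.Injective ψ := by
    rw [hψdef]
    cases i with
    | true => simpa using φ.injective
    | false =>
      simp only [Bool.false_eq_true, if_false]
      intro a b h
      apply φ.injective
      funext j
      have := congrFun h j
      simpa using this
  have hψ : ∀ a ∈ A, ∀ b ∈ A, a < b → BLex (ψ a) (ψ b) := by
    intro a ha b hb hab
    have hh := hhom a ha b hb hab
    rw [hψdef]
    cases i with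
    | true =>
      rw [decide_eq_true_eq] at hh
      simpa using hh
    | false =>
      simp only [decide_eq_false_iff_not] at hh
      have hne : φ a ≠ φ b := fun e => (ne_of_lt hab) (φ.injective e)
      rcases blex_trichotomy hne with h | h
      · exact absurd h hh
      · simp only [Bool.false_eq_true, if_false]
        exact blex_flip h
  -- remove the maximum
  set A' : Set ↥(Set.Iio κ.ord) := {x | x ∈ A ∧ ∃ y ∈ A, x < y} with hA'def
  have hsubA : A' ⊆ A := fun x hx => hx.1
  have hA'κ : Cardinal.lift.{1} κ ≤ #↥A' := by
    by_contra hc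
    push_neg at hc
    have hss : (A \ A').Subsingleton := by
      intro x hx y hy
      by_contra hne
      rcases Ne.lt_or_gt hne with h | h
      · exact hx.2 ⟨hx.1, y, hy.1, h⟩
      · exact hy.2 ⟨hy.1, x, hx.1, h⟩
    have h1 : #↥(A \ A') ≤ 1 := hss.cardinalMk_le_one
    have h2 : #↥(A \ A') + #↥A' = #↥A := Cardinal.mk_diff_add_mk hsubA
    have hlift : ℵ₀ ≤ Cardinal.lift.{1} κ := Cardinal.aleph0_le_lift.mpr hκ0
    have : #↥A < Cardinal.lift.{1} κ := by
      rw [← h2]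
      exact Cardinal.add_lt_of_lt hlift
        (h1.trans_lt (Cardinal.one_lt_aleph0.trans_le hlift)) hc
    rw [hA] at this
    exact lt_irrefl _ this
  -- successor function on A'
  have hnxt : ∀ x : ↥A', ∃ y : ↥(Set.Iio κ.ord), y ∈ A ∧ (x : ↥(Set.Iio κ.ord)) < y ∧
      ∀ z ∈ A, (x : ↥(Set.Iio κ.ord)) < z → y ≤ z := by
    intro x
    obtain ⟨hxA, y0, hy0A, hy0⟩ := x.2
    obtain ⟨y, ⟨hyA, hxy⟩, hmin⟩ := (IsWellFounded.wf
      (r := (· < · : ↥(Set.Iio κ.ord) → ↥(Set.Iio κ.ord) → Prop))).has_min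
      {z | z ∈ A ∧ (x : ↥(Set.Iio κ.ord)) < z} ⟨y0, hy0A, hy0⟩
    refine ⟨y, hyA, hxy, fun z hz hxz => ?_⟩
    by_contra hc
    push_neg at hc
    exact hmin z ⟨hz, hxz⟩ hc
  choose nxt hnxtA hnxtlt hnxtmin using hnxt
  have hblex : ∀ x : ↥A', ∃ d : σ, ψ (x : ↥(Set.Iio κ.ord)) d = false ∧ ψ (nxt x) d = true ∧
      ∀ j, j < d → ψ (x : ↥(Set.Iio κ.ord)) j = ψ (nxt x) j :=
    fun x => hψ _ x.2.1 _ (hnxtA x) (hnxtlt x)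
  choose δ hδ1 hδ2 hδ3 using hblex
  set T := Σ d : σ, ({j : σ // j ≤ d} → Bool) with hTdef
  set t : ↥A' → T := fun x => ⟨δ x, fun j => ψ (x : ↥(Set.Iio κ.ord)) j⟩ with htdef
  -- evaluation maps
  have heval : ∀ (j : σ) (x y : ↥A'), t x = t y → j ≤ δ x →
      ψ (x : ↥(Set.Iio κ.ord)) j = ψ (y : ↥(Set.Iio κ.ord)) j := by
    intro j x y heq hj
    have h1 : δ x = δ y := congrArg Sigma.fst heq
    have hj' : j ≤ δ y := h1 ▸ hj
    have := congrArg (fun p : T => if h : j ≤ p.1 then p.2 ⟨j, h⟩ else false) heq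
    simpa [htdef, hj, hj'] using this
  have key : ∀ x y : ↥A', (x : ↥(Set.Iio κ.ord)) < (y : ↥(Set.Iio κ.ord)) → t x ≠ t y := by
    intro x y hlt heq
    have h1 : δ x = δ y := congrArg Sigma.fst heq
    have hyA : (y : ↥(Set.Iio κ.ord)) ∈ A := y.2.1
    have hle : nxt x ≤ (y : ↥(Set.Iio κ.ord)) := hnxtmin x _ hyA hlt
    rcases eq_or_lt_of_le hle with hE | hL
    · -- nxt x = y
      have e1 : ψ (y : ↥(Set.Iio κ.ord)) (δ x) = true := by rw [← hE]; exact hδ2 x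
      have e2 : ψ (x : ↥(Set.Iio κ.ord)) (δ x) = ψ (y : ↥(Set.Iio κ.ord)) (δ x) :=
        heval (δ x) x y heq le_rfl
      rw [hδ1 x, e1] at e2
      exact Bool.false_ne_true e2
    · -- nxt x < y
      obtain ⟨e, he1, he2, he3⟩ := hψ _ (hnxtA x) _ hyA hL
      rcases lt_trichotomy e (δ x) with hed | hed | hed
      · have q1 : ψ (x : ↥(Set.Iio κ.ord)) e = ψ (nxt x) e := hδ3 x e hed
        have q2 : ψ (x : ↥(Set.Iio κ.ord)) e = ψ (y : ↥(Set.Iio κ.ord)) e :=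
          heval e x y heq hed.le
        rw [q1, he1] at q2
        rw [he2] at q2
        simp at q2
      · rw [hed] at he1
        rw [hδ2 x] at he1
        simp at he1
      · have q1 : ψ (nxt x) (δ x) = ψ (y : ↥(Set.Iio κ.ord)) (δ x) := he3 _ hed
        have q2 : ψ (x : ↥(Set.Iio κ.ord)) (δ x) = ψ (y : ↥(Set.Iio κ.ord)) (δ x) :=
          heval (δ x) x y heq le_rfl
        rw [hδ1 x] at q2
        rw [hδ2 x] at q1
        rw [← q2] at q1
        simp at q1
  have hinj : Function.Injective t := by
    intro x y h
    by_contra hne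
    have hne' : (x : ↥(Set.Iio κ.ord)) ≠ (y : ↥(Set.Iio κ.ord)) :=
      fun e => hne (Subtype.ext e)
    rcases hne'.lt_or_gt with hlt | hlt
    · exact key x y hlt h
    · exact key y x hlt h.symm
  have hκT : κ ≤ #T := by
    have h0 : Cardinal.lift.{0} #↥A' ≤ Cardinal.lift.{1} #T := Cardinal.lift_mk_le'.mpr ⟨⟨t, hinj⟩⟩
    rw [Cardinal.lift_id'.{0,1}] at h0
    exact Cardinal.lift_le.mp (hA'κ.trans h0)
  have hTlt : #T < κ := by
    have hTeq : #T = Cardinal.sum (fun d : σ => #({j : σ // j ≤ d} → Bool)) :=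
      Cardinal.mk_sigma _
    rw [hTeq]
    refine wc_sum_small hκ _ (by rw [hmkσ]; exact Cardinal.lt_ord.mp hα) ?_
    intro d
    have hsub : #{j : σ // j ≤ d} ≤ ((@Ordinal.typein σ (· < ·) isWellOrder_lt) d).card + 1 := by
      rw [@Ordinal.card_typein σ (· < ·) isWellOrder_lt d]
      have h : #{j : σ // j ≤ d} ≤ #(Option {j : σ // j < d}) := by
        refine Cardinal.mk_le_of_injective
          (f := fun j => if h : (j : σ) < d then some (⟨(j : σ), h⟩ : {j : σ // j < d}) else none) ?_
        intro j1 j2 hj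
        by_cases h1 : (j1 : σ) < d <;> by_cases h2 : (j2 : σ) < d
        · simp only [dif_pos h1, dif_pos h2, Option.some.injEq, Subtype.mk.injEq] at hj
          exact Subtype.ext hj
        · simp only [dif_pos h1, dif_neg h2] at hj
          exact absurd hj (Option.some_ne_none _)
        · simp only [dif_neg h1, dif_pos h2] at hj
          exact absurd hj.symm (Option.some_ne_none _)
        · exact Subtype.ext ((le_antisymm j1.2 (not_lt.mp h1)).trans
            (le_antisymm j2.2 (not_lt.mp h2)).symm)
      rwa [Cardinal.mk_option] at h
    have htd : (@Ordinal.typein σ (· < ·) isWellOrder_lt) d < α := by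
      have h := @Ordinal.typein_lt_type σ (· < ·) isWellOrder_lt d
      rwa [Ordinal.type_toType] at h
    have hIH : (2 : Cardinal) ^ ((@Ordinal.typein σ (· < ·) isWellOrder_lt) d).card < κ :=
      IH _ htd (htd.trans hα)
    have h2κ : (2 : Cardinal) < κ := by
      have h2 : (2 : Cardinal) < ℵ₀ := by
        have := Cardinal.nat_lt_aleph0.{0} 2
        simpa using this
      exact h2.trans_le hκ0
    calc #({j : σ // j ≤ d} → Bool) = 2 ^ #{j : σ // j ≤ d} := by
          rw [Cardinal.mk_arrow, Cardinal.mk_bool, Cardinal.lift_id, Cardinal.lift_id]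
      _ ≤ 2 ^ (((@Ordinal.typein σ (· < ·) isWellOrder_lt) d).card + 1) :=
          Cardinal.power_le_power_left two_ne_zero hsub
      _ = 2 ^ ((@Ordinal.typein σ (· < ·) isWellOrder_lt) d).card * 2 := by
          rw [Cardinal.power_add, Cardinal.power_one]
      _ < κ := Cardinal.mul_lt_of_lt hκ0 hIH h2κ
  exact (hκT.trans_lt hTlt).false

namespace CU

variable {κ : Cardinal.{0}}

lemma set_nonempty (a b : cantor κ) :
    {α : Ordinal | α < κ.ord ∧ ∀ β : ↥(Set.Iio κ.ord), (β : Ordinal) < α → a β = b β}.Nonempty ∨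
      κ.ord = 0 := by
  rcases eq_or_ne κ.ord 0 with h | h
  · exact Or.inr h
  · exact Or.inl ⟨0, pos_iff_ne_zero.mpr h, fun β hβ => absurd hβ not_lt_zero⟩

lemma mem_zero (h : (0:Ordinal) < κ.ord) (a b : cantor κ) :
    (0:Ordinal) ∈ {α : Ordinal | α < κ.ord ∧ ∀ β : ↥(Set.Iio κ.ord), (β : Ordinal) < α → a β = b β} :=
  ⟨h, fun β hβ => absurd hβ not_lt_zero⟩

lemma bdd (a b : cantor κ) :
    BddAbove {α : Ordinal | α < κ.ord ∧ ∀ β : ↥(Set.Iio κ.ord), (β : Ordinal) < α → a β = b β} :=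
  ⟨κ.ord, fun α hα => hα.1.le⟩

lemma ultra_le (h : (0:Ordinal) < κ.ord) (a b : cantor κ) : cantorUltra κ a b ≤ κ.ord :=
  csSup_le ⟨0, mem_zero h a b⟩ (fun α hα => hα.1.le)

lemma agree_of_le {a b : cantor κ} {γ : Ordinal} (hγ : γ ≤ cantorUltra κ a b)
    (β : ↥(Set.Iio κ.ord)) (hβ : (β : Ordinal) < γ) : a β = b β := by
  have hne : {α : Ordinal | α < κ.ord ∧ ∀ β : ↥(Set.Iio κ.ord), (β : Ordinal) < α → a β = b β}.Nonempty := by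
    rcases set_nonempty a b with h | h
    · exact h
    · have hβ2 : (β : Ordinal) < κ.ord := β.2
      exact absurd h ((lt_of_le_of_lt zero_le hβ2).ne')
  have hlt : (β : Ordinal) < cantorUltra κ a b := hβ.trans_le hγ
  obtain ⟨α, hα, hβα⟩ := exists_lt_of_lt_csSup hne hlt
  exact hα.2 β hβα

lemma le_of_agree {a b : cantor κ} {γ : Ordinal} (hγ : γ < κ.ord)
    (h : ∀ β : ↥(Set.Iio κ.ord), (β : Ordinal) < γ → a β = b β) : γ ≤ cantorUltra κ a b :=
  le_csSup (bdd a b) ⟨hγ, h⟩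

lemma ultra_self (hκ : Cardinal.aleph0 ≤ κ) (a : cantor κ) : cantorUltra κ a a = κ.ord := by
  have hlim := Cardinal.isSuccLimit_ord hκ
  refine le_antisymm (ultra_le hlim.pos a a) (le_of_forall_lt fun γ hγ => ?_)
  have h1 : γ + 1 < κ.ord := by
    rw [Ordinal.add_one_eq_succ]
    exact hlim.succ_lt hγ
  have h2 : γ < γ + 1 := by
    rw [Ordinal.add_one_eq_succ]
    exact Order.lt_succ γ
  exact h2.trans_le (le_of_agree h1 fun β _ => rfl)

lemma ultra_symm (a b : cantor κ) : cantorUltra κ a b = cantorUltra κ b a := by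
  unfold cantorUltra
  congr 1
  ext α
  exact and_congr_right fun _ => forall_congr' fun β => forall_congr' fun hβ => eq_comm

lemma ultra_trans {a b c : cantor κ} {γ : Ordinal} (hγ : γ < κ.ord)
    (h1 : γ ≤ cantorUltra κ a b) (h2 : γ ≤ cantorUltra κ b c) : γ ≤ cantorUltra κ a c :=
  le_of_agree hγ fun β hβ => (agree_of_le h1 β hβ).trans (agree_of_le h2 β hβ)

lemma mem_ball_self (hκ : Cardinal.aleph0 ≤ κ) {α : Ordinal} (hα : α ≤ κ.ord) (x : cantor κ) :
    x ∈ Ball (cantorUltra κ) α x := by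
  show α ≤ cantorUltra κ x x
  rw [ultra_self hκ]
  exact hα

lemma ball_mono {α β : Ordinal} (h : α ≤ β) (x : cantor κ) :
    Ball (cantorUltra κ) β x ⊆ Ball (cantorUltra κ) α x :=
  fun _ hy => h.trans hy

lemma ball_eq_of_mem {α : Ordinal} (hα : α < κ.ord) {x z : cantor κ}
    (hz : z ∈ Ball (cantorUltra κ) α x) : Ball (cantorUltra κ) α z = Ball (cantorUltra κ) α x := by
  have hxz : α ≤ cantorUltra κ x z := hz
  have hzx : α ≤ cantorUltra κ z x := (ultra_symm x z) ▸ hxz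
  ext y
  constructor
  · intro hy
    exact ultra_trans hα hxz hy
  · intro hy
    exact ultra_trans hα hzx hy

lemma isBasis (hκ : Cardinal.aleph0 ≤ κ) :
    TopologicalSpace.IsTopologicalBasis
      {s : Set (cantor κ) | ∃ x α, α < κ.ord ∧ s = Ball (cantorUltra κ) α x} := by
  have hlim := Cardinal.isSuccLimit_ord hκ
  refine ⟨?_, ?_, rfl⟩
  · rintro t₁ ⟨x, α, hα, rfl⟩ t₂ ⟨y, β, hβ, rfl⟩ z hz
    refine ⟨Ball (cantorUltra κ) (max α β) z, ⟨z, max α β, max_lt hα hβ, rfl⟩,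
      mem_ball_self hκ (max_lt hα hβ).le z, ?_⟩
    intro w hw
    constructor
    · have : w ∈ Ball (cantorUltra κ) α z := ball_mono (le_max_left α β) z hw
      rw [ball_eq_of_mem hα hz.1] at this
      exact this
    · have : w ∈ Ball (cantorUltra κ) β z := ball_mono (le_max_right α β) z hw
      rw [ball_eq_of_mem hβ hz.2] at this
      exact this
  · refine Set.eq_univ_of_forall fun x => ?_
    exact ⟨Ball (cantorUltra κ) 0 x, ⟨x, 0, hlim.pos, rfl⟩, mem_ball_self hκ hlim.pos.le x⟩

end CU

theorem stmt15 (κ : Cardinal.{0}) (hκ : WeaklyCompact κ)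
    (A : Set (cantor κ)) (hA : IsNowhereDense A) :
    UnifNwd κ.ord (cantorUltra κ) A := by
  classical
  have hκ0 : Cardinal.aleph0 ≤ κ := hκ.1.le
  have hlim := Cardinal.isSuccLimit_ord hκ0
  have hbasis := CU.isBasis (κ := κ) hκ0
  have hsucc : ∀ γ : Ordinal, γ < κ.ord → γ < γ + 1 ∧ γ + 1 < κ.ord := by
    intro γ hγ
    constructor
    · rw [Ordinal.add_one_eq_succ]; exact Order.lt_succ γ
    · rw [Ordinal.add_one_eq_succ]; exact hlim.succ_lt hγ
  have hC : ∀ α, α < κ.ord → ∀ b : cantor κ, ∃ a ∈ Ball (cantorUltra κ) α b,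
      ∃ β, α < β ∧ β < κ.ord ∧ Ball (cantorUltra κ) β a ∩ A = ∅ := by
    intro α hα b
    have hopen : IsOpen (Ball (cantorUltra κ) α b) :=
      hbasis.isOpen ⟨b, α, hα, rfl⟩
    have hnotsub : ¬ Ball (cantorUltra κ) α b ⊆ closure A := by
      intro hsub
      have hmem : b ∈ interior (closure A) :=
        mem_interior.mpr ⟨_, hsub, hopen, CU.mem_ball_self hκ0 hα.le b⟩
      rw [hA] at hmem
      exact hmem
    obtain ⟨a, ha, hna⟩ := not_subset.mp hnotsub
    have hopen' : IsOpen (closure A)ᶜ := isClosed_closure.isOpen_compl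
    obtain ⟨t, ⟨c, δ, hδ, rfl⟩, hat, hts⟩ := hbasis.exists_subset_of_mem_open hna hopen'
    refine ⟨a, ha, max δ (α + 1), ?_, ?_, ?_⟩
    · exact lt_of_lt_of_le (hsucc α hα).1 (le_max_right _ _)
    · exact max_lt hδ (hsucc α hα).2
    · rw [Set.eq_empty_iff_forall_notMem]
      intro z hz
      have h1 : z ∈ Ball (cantorUltra κ) δ a :=
        CU.ball_mono (le_max_left _ _) a hz.1
      rw [CU.ball_eq_of_mem hδ hat] at h1
      exact hts h1 (subset_closure hz.2)
  intro α hα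
  set σ := α.ToType with hσdef
  set e := Ordinal.ToType.mk (o := α) with hedef
  set ext : (σ → Bool) → cantor κ :=
    fun s x => if h : (x : Ordinal) < α then s (e ⟨(x : Ordinal), h⟩) else false with hextdef
  have hCC := fun s : σ → Bool => hC α hα (ext s)
  choose a ha β hαβ hβκ hdisj using hCC
  have hcardlt : Cardinal.mk (σ → Bool) < κ := by
    rw [Cardinal.mk_arrow, Cardinal.mk_bool, Cardinal.mk_toType,
      Cardinal.lift_id, Cardinal.lift_id]
    exact wc_two_power_lt hκ α hα
  obtain ⟨b0, hb0, hble⟩ := wc_sup_small hκ β hcardlt hβκ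
  refine ⟨max (b0 + 1) (α + 1), ?_, ?_, ?_⟩
  · exact lt_of_lt_of_le (hsucc α hα).1 (le_max_right _ _)
  · exact max_lt (hsucc b0 hb0).2 (hsucc α hα).2
  · intro b
    set s : σ → Bool := fun d =>
      b ⟨((e.symm d : ↥(Set.Iio α)) : Ordinal), Set.mem_Iio.mpr (lt_trans (Set.mem_Iio.mp (e.symm d).2) hα)⟩ with hsdef
    have hres : α ≤ cantorUltra κ (ext s) b := by
      refine CU.le_of_agree hα fun x hx => ?_
      have h1 : e.symm (e ⟨(x : Ordinal), hx⟩) = ⟨(x : Ordinal), hx⟩ := e.symm_apply_apply _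
      show (if h : (x : Ordinal) < α then s (e ⟨(x : Ordinal), h⟩) else false) = b x
      rw [dif_pos hx, hsdef]
      refine congrArg b (Subtype.ext ?_)
      show ((e.symm (e ⟨(x : Ordinal), hx⟩) : ↥(Set.Iio α)) : Ordinal) = (x : Ordinal)
      rw [h1]
    refine ⟨a s, ?_, ?_⟩
    · show α ≤ cantorUltra κ b (a s)
      have h1 : α ≤ cantorUltra κ b (ext s) := (CU.ultra_symm (ext s) b) ▸ hres
      exact CU.ultra_trans hα h1 (ha s)
    · rw [Set.eq_empty_iff_forall_notMem]
      intro z hz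
      have h1 : z ∈ Ball (cantorUltra κ) (β s) (a s) := by
        refine CU.ball_mono ?_ (a s) hz.1
        exact (hble s).trans (le_trans (le_of_lt (hsucc b0 hb0).1) (le_max_left _ _))
      simp only [Set.eq_empty_iff_forall_notMem] at hdisj
      exact hdisj s z ⟨h1, hz.2⟩
end

section
/- Let κ be a regular cardinal, let (X,u) be a κ-ultrametric space that is κ-compact in the induced topology, and let (Y,d) be a τ-ultrametric space for an arbitrary ordinal τ. Then every continuous map f : X → Y (with respect to the ultrametric topologies) is uniformly continuous. -/
open Set Function

universe u v

lemma mem_ball_self' {X : Type u} {γ : Ordinal} {u : X → X → Ordinal}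
    (hu : IsUltrametric γ u) {α : Ordinal} (hα : α ≤ γ) (x : X) : x ∈ Ball u α x := by
  show α ≤ u x x
  rw [(hu.eq_gamma_iff x x).mpr rfl]; exact hα

lemma ultra_isBasis {X : Type u} {γ : Ordinal} {u : X → X → Ordinal}
    (hu : IsUltrametric γ u) (hγ : 0 < γ) :
    @TopologicalSpace.IsTopologicalBasis X (ballTopology γ u)
      {s : Set X | ∃ x α, α < γ ∧ s = Ball u α x} := by
  refine @TopologicalSpace.IsTopologicalBasis.mk X (ballTopology γ u) _ ?_ ?_ rfl
  · rintro t₁ ⟨x, α, hα, rfl⟩ t₂ ⟨y, β, hβ, rfl⟩ z ⟨hz1, hz2⟩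
    refine ⟨Ball u (max α β) z, ⟨z, max α β, max_lt hα hβ, rfl⟩,
      mem_ball_self' hu (max_lt hα hβ).le z, ?_⟩
    intro w hw
    have hw' : max α β ≤ u z w := hw
    constructor
    · show α ≤ u x w
      have := hu.triangle z x w
      calc α ≤ min (u x z) (u z w) := le_min hz1 (le_trans (le_max_left _ _) hw')
        _ ≤ u x w := this
    · show β ≤ u y w
      have := hu.triangle z y w
      calc β ≤ min (u y z) (u z w) := le_min hz2 (le_trans (le_max_right _ _) hw')
        _ ≤ u y w := this
  · apply Set.eq_univ_of_forall
    intro x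
    exact ⟨Ball u 0 x, ⟨x, 0, hγ, rfl⟩, mem_ball_self' hu hγ.le x⟩

theorem stmt16 (κ : Cardinal.{0}) (hκ : κ.IsRegular)
    (X : Type u) (uX : X → X → Ordinal) (hX : IsUltrametric κ.ord uX)
    (hc : KappaCompact X (ballTopology κ.ord uX) κ)
    (Y : Type v) (τ : Ordinal) (d : Y → Y → Ordinal) (hY : IsUltrametric τ d)
    (f : X → Y)
    (hf : @Continuous X Y (ballTopology κ.ord uX) (ballTopology τ d) f) :
    UnifCont κ.ord τ uX d f := by
  intro ε hε
  have hord : (0 : Ordinal) < κ.ord := by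
    calc (0 : Ordinal) < Cardinal.aleph0.ord := by
          rw [Cardinal.ord_aleph0]; exact Ordinal.omega0_pos
      _ ≤ κ.ord := Cardinal.ord_le_ord.mpr hκ.aleph0_le
  -- for each x, choose a radius that works
  have key : ∀ x : X, ∃ α, α < κ.ord ∧ ∀ a ∈ Ball uX α x, ε ≤ d (f x) (f a) := by
    intro x
    have hopen : (ballTopology τ d).IsOpen (Ball d ε (f x)) :=
      TopologicalSpace.isOpen_generateFrom_of_mem ⟨f x, ε, hε, rfl⟩
    have hpre : (ballTopology κ.ord uX).IsOpen (f ⁻¹' Ball d ε (f x)) :=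
      @IsOpen.preimage X Y (ballTopology κ.ord uX) (ballTopology τ d) f hf _ hopen
    have hxmem : x ∈ f ⁻¹' Ball d ε (f x) := mem_ball_self' hY hε.le (f x)
    obtain ⟨v, ⟨z, α, hα, rfl⟩, hxv, hvsub⟩ :=
      @TopologicalSpace.IsTopologicalBasis.exists_subset_of_mem_open X
        (ballTopology κ.ord uX) _ (ultra_isBasis hX hord) x _ hxmem hpre
    refine ⟨α, hα, ?_⟩
    intro a ha
    have hxa : a ∈ Ball uX α z := by
      show α ≤ uX z a
      calc α ≤ min (uX z x) (uX x a) := le_min hxv ha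
        _ ≤ uX z a := hX.triangle x z a
    exact hvsub hxa
  choose α hα hball using key
  -- cover by the chosen balls and extract a small subcover
  obtain ⟨D, hDC, hDcard, hDcover⟩ := hc (Set.range fun x => Ball uX (α x) x)
    (by rintro s ⟨x, rfl⟩
        exact TopologicalSpace.isOpen_generateFrom_of_mem ⟨x, α x, hα x, rfl⟩)
    (Set.eq_univ_of_forall fun x =>
      ⟨Ball uX (α x) x, ⟨x, rfl⟩, mem_ball_self' hX (hα x).le x⟩)
  -- pick a center for each ball in the subcover
  have hDc : ∀ s : ↥D, ∃ x : X, Ball uX (α x) x = (s : Set X) := fun s => hDC s.2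
  choose ctr hctr using hDc
  -- bound the radii
  have hsup : (⨆ s : ↥D, Ordinal.lift.{u} (α (ctr s))) < Ordinal.lift.{u} κ.ord := by
    apply Ordinal.iSup_lt_ord_lift
    · rw [← Ordinal.lift_cof, hκ.cof_eq, Cardinal.lift_id]
      exact hDcard
    · intro s
      exact Ordinal.lift_lt.mpr (hα (ctr s))
  obtain ⟨δ, hδ⟩ := Ordinal.mem_range_lift_of_le hsup.le
  refine ⟨δ, ?_, ?_⟩
  · have : Ordinal.lift.{u} δ < Ordinal.lift.{u} κ.ord := hδ ▸ hsup
    exact Ordinal.lift_lt.mp this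
  · intro a b hab
    have ha : a ∈ ⋃₀ D := hDcover ▸ Set.mem_univ a
    obtain ⟨s, hsD, has⟩ := ha
    set x := ctr ⟨s, hsD⟩ with hx
    have hax : α x ≤ uX x a := by
      have h : Ball uX (α x) x = s := hctr ⟨s, hsD⟩
      rw [← h] at has; exact has
    have hαδ : α x ≤ δ := by
      rw [← Ordinal.lift_le.{u}, hδ]
      exact Ordinal.le_iSup (fun s : ↥D => Ordinal.lift.{u} (α (ctr s))) ⟨s, hsD⟩
    have hxb : α x ≤ uX x b := by
      calc α x ≤ min (uX x a) (uX a b) := le_min hax (hαδ.trans hab)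
        _ ≤ uX x b := hX.triangle a x b
    have h1 : ε ≤ d (f x) (f a) := hball x a hax
    have h2 : ε ≤ d (f x) (f b) := hball x b hxb
    calc ε ≤ min (d (f a) (f x)) (d (f x) (f b)) := le_min (hY.symm (f x) (f a) ▸ h1) h2
      _ ≤ d (f a) (f b) := hY.triangle (f x) (f a) (f b)
end

section
/- Let κ be a weakly compact cardinal. Then every κ-compact κ-ultrametric space (K,u) of weight at most κ can be embedded into 2^κ (equipped with the topology induced by the κ-ultrametric u(a,b) = sup{α < κ : a↾α = b↾α}) in such a way that its image is a nowhere dense subset of 2^κ. -/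
open Set Function

universe u v

namespace Stmt17Aux

open Cardinal Ordinal TopologicalSpace

/-- intersection of two balls with common center -/
theorem ball_inter {X : Type u} (u : X → X → Ordinal) (α β : Ordinal) (z : X) :
    Ball u α z ∩ Ball u β z = Ball u (max α β) z := by
  ext w
  simp only [Ball, mem_inter_iff, mem_setOf_eq, max_le_iff]

/-- generic basis lemma -/
theorem isBasis_balls {X : Type u} (γ : Ordinal) (u : X → X → Ordinal) (hγ : 0 < γ)
    (h1 : ∀ α < γ, ∀ x, x ∈ Ball u α x)
    (h2 : ∀ α < γ, ∀ x y, y ∈ Ball u α x → Ball u α x = Ball u α y) :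
    @TopologicalSpace.IsTopologicalBasis X (ballTopology γ u)
      {s : Set X | ∃ x α, α < γ ∧ s = Ball u α x} := by
  letI : TopologicalSpace X := ballTopology γ u
  refine IsTopologicalBasis.mk ?_ ?_ rfl
  · rintro s ⟨x, α, hα, rfl⟩ s' ⟨y, β, hβ, rfl⟩ z hz
    have e1 : Ball u α x = Ball u α z := h2 α hα x z hz.1
    have e2 : Ball u β y = Ball u β z := h2 β hβ y z hz.2
    refine ⟨Ball u (max α β) z, ⟨z, max α β, max_lt hα hβ, rfl⟩, ?_, ?_⟩
    · exact h1 _ (max_lt hα hβ) z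
    · rw [e1, e2, ball_inter]
  · apply eq_univ_of_forall
    intro x
    exact ⟨Ball u 0 x, ⟨x, 0, hγ, rfl⟩, h1 0 hγ x⟩

variable {κ : Cardinal.{0}}

theorem le_cantorUltra_iff {a b : cantor κ} {α : Ordinal} (hα : α < κ.ord) :
    α ≤ cantorUltra κ a b ↔ ∀ β : ↥(Set.Iio κ.ord), (β : Ordinal) < α → a β = b β := by
  constructor
  · intro h β hβ
    by_contra hne
    have hub : cantorUltra κ a b ≤ (β : Ordinal) := by
      apply csSup_le'
      rintro γ ⟨hγ1, hγ2⟩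
      by_contra hβγ
      exact hne (hγ2 β (lt_of_not_ge hβγ))
    exact absurd (h.trans hub) (not_le.2 hβ)
  · intro h
    exact le_csSup ⟨κ.ord, fun γ hγ => hγ.1.le⟩ ⟨hα, h⟩

theorem cantorUltra_le_of_ne (hκ : Order.IsSuccLimit κ.ord) {a b : cantor κ} {p : ↥(Set.Iio κ.ord)}
    (h : a p ≠ b p) : cantorUltra κ a b ≤ (p : Ordinal) := by
  by_contra h'
  have hp1 : (p : Ordinal) + 1 < κ.ord := by
    rw [Ordinal.add_one_eq_succ]; exact hκ.succ_lt p.2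
  have hle : (p : Ordinal) + 1 ≤ cantorUltra κ a b := by
    rw [Ordinal.add_one_eq_succ, Order.succ_le_iff]
    exact lt_of_not_ge h'
  exact h (((le_cantorUltra_iff hp1).1 hle) p
    (by rw [Ordinal.add_one_eq_succ]; exact Order.lt_succ _))

theorem cantor_mem_ball_self {a : cantor κ} {α : Ordinal} (hα : α < κ.ord) :
    a ∈ Ball (cantorUltra κ) α a :=
  (le_cantorUltra_iff hα).2 fun _ _ => rfl

theorem cantor_ball_eq {α : Ordinal} (hα : α < κ.ord) {x y : cantor κ}
    (h : y ∈ Ball (cantorUltra κ) α x) :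
    Ball (cantorUltra κ) α x = Ball (cantorUltra κ) α y := by
  have hxy := (le_cantorUltra_iff hα).1 h
  ext z
  simp only [Ball, mem_setOf_eq]
  rw [le_cantorUltra_iff hα, le_cantorUltra_iff hα]
  constructor
  · intro hz β hβ; rw [← hxy β hβ]; exact hz β hβ
  · intro hz β hβ; rw [hxy β hβ]; exact hz β hβ

/-- weakly compact cardinals are regular -/
theorem regular_of_wc (hκ : WeaklyCompact κ) : κ.IsRegular := by
  classical
  obtain ⟨h0, hram⟩ := hκ
  refine ⟨h0.le, ?_⟩
  by_contra hlt
  push_neg at hlt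
  obtain ⟨ι, f, hlsub, hmk⟩ := Ordinal.exists_lsub_cof κ.ord
  have hmax : ∀ x : ↥(Set.Iio κ.ord), ∃ i : ι, (x : Ordinal) ≤ f i := by
    intro x
    have : (x : Ordinal) < Ordinal.lsub f := by rw [hlsub]; exact x.2
    exact (Ordinal.lt_lsub_iff).1 this
  choose p hp using hmax
  obtain ⟨i, A, hA, hhom⟩ := hram (fun a b => decide (p a = p b))
  have hApos : A.Nonempty := by
    have hne : #↥A ≠ 0 := by
      rw [hA]
      simp only [ne_eq, Cardinal.lift_eq_zero]
      exact (aleph0_pos.trans h0).ne'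
    rcases Cardinal.mk_ne_zero_iff.1 hne with ⟨a⟩
    exact ⟨a, a.2⟩
  have hpair : ∀ a ∈ A, ∀ b ∈ A, a ≠ b → (decide (p a = p b) : Bool) = i := by
    intro a ha b hb hab
    rcases lt_or_gt_of_ne hab with h | h
    · exact hhom a ha b hb h
    · have := hhom b hb a ha h
      simpa [eq_comm] using this
  cases i with
  | true =>
    obtain ⟨a0, ha0⟩ := hApos
    have hsub : A ⊆ {x : ↥(Set.Iio κ.ord) | (x : Ordinal) ≤ f (p a0)} := by
      intro x hx
      by_cases hxa : x = a0
      · subst hxa; exact hp x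
      · have := hpair x hx a0 ha0 hxa
        have hpe : p x = p a0 := by simpa using this
        rw [mem_setOf_eq, ← hpe]
        exact hp x
    have h1 : #A ≤ #↥{x : ↥(Set.Iio κ.ord) | (x : Ordinal) ≤ f (p a0)} :=
      Cardinal.mk_le_mk_of_subset hsub
    have h2 : #↥{x : ↥(Set.Iio κ.ord) | (x : Ordinal) ≤ f (p a0)}
        ≤ #↥(Set.Iio (Order.succ (f (p a0)))) := by
      have hinj2 : Function.Injective
          (fun x : ↥{x : ↥(Set.Iio κ.ord) | (x : Ordinal) ≤ f (p a0)} =>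
          (⟨((x : ↥(Set.Iio κ.ord)) : Ordinal), by
            rw [Set.mem_Iio]; exact lt_of_le_of_lt x.2 (Order.lt_succ _)⟩ :
            ↥(Set.Iio (Order.succ (f (p a0)))))) := by
        intro x y hxy
        have hval := congrArg Subtype.val hxy
        simp only at hval
        exact Subtype.ext (Subtype.ext hval)
      exact Cardinal.mk_le_of_injective hinj2
    have h3 : #↥(Set.Iio (Order.succ (f (p a0)))) < Cardinal.lift.{1} κ := by
      rw [Ordinal.mk_Iio_ordinal, Cardinal.lift_lt]
      rw [← Cardinal.lt_ord]
      have hfi : f (p a0) < κ.ord := by rw [← hlsub]; exact Ordinal.lt_lsub f _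
      exact (Cardinal.isSuccLimit_ord h0.le).succ_lt hfi
    rw [hA] at h1
    exact absurd (h1.trans_lt (h2.trans_lt h3)) (lt_irrefl _)
  | false =>
    have hinj : Function.Injective (fun a : ↥A => ULift.up.{1} (p ↑a)) := by
      intro a b hab
      by_contra hne
      have hab' : (a : ↥(Set.Iio κ.ord)) ≠ (b : ↥(Set.Iio κ.ord)) := by
        intro h; exact hne (Subtype.ext h)
      have := hpair ↑a a.2 ↑b b.2 hab'
      simp only [decide_eq_false_iff_not] at this
      exact this (congrArg ULift.down hab)
    have h1 : #↥A ≤ #(ULift.{1} ι) := Cardinal.mk_le_of_injective hinj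
    rw [Cardinal.mk_uLift, hmk, hA] at h1
    exact absurd h1 (not_le.2 (Cardinal.lift_lt.2 hlt))

/-- sup of a small set of ordinals below `κ.ord` stays below, for regular `κ`. -/
theorem sSup_lt_ord_of_reg (hreg : κ.IsRegular) {S : Set Ordinal.{0}}
    (hS : ∀ o ∈ S, o < κ.ord) (hcard : #↥S < Cardinal.lift.{1} κ) : sSup S < κ.ord := by
  have hsub : S ⊆ Set.Iio κ.ord := fun o ho => hS o ho
  have hsmall : Small.{0} ↥S := small_subset hsub
  have hrange : Set.range (fun i : Shrink.{0} ↥S => (((equivShrink ↥S).symm i : ↥S) : Ordinal)) = S := by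
    ext o
    constructor
    · rintro ⟨i, rfl⟩; exact ((equivShrink ↥S).symm i).2
    · intro ho
      exact ⟨equivShrink ↥S ⟨o, ho⟩, by simp⟩
  have : sSup S = ⨆ i : Shrink.{0} ↥S, (((equivShrink ↥S).symm i : ↥S) : Ordinal) := by
    rw [iSup, hrange]
  rw [this]
  apply Ordinal.iSup_lt_ord
  · rw [hreg.cof_eq]
    have hls : Cardinal.lift.{1} #(Shrink.{0} ↥S) = #↥S := by
      simpa using Cardinal.lift_mk_shrink.{1, 0, 0} ↥S
    rw [← Cardinal.lift_lt.{0, 1}, hls]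
    exact hcard
  · intro i
    exact hS _ ((equivShrink ↥S).symm i).2



theorem sigma_ext_aux {ι : Type v} {X : Type u} {P : ι → Set X}
    {a b : (i : ι) × ↥(P i)} (h1 : a.1 = b.1) (h2 : (a.2 : X) = (b.2 : X)) : a = b := by
  rcases a with ⟨i1, d1⟩
  rcases b with ⟨i2, d2⟩
  dsimp at h1 h2
  subst h1
  exact congrArg (Sigma.mk i1) (Subtype.ext h2)

/-- The main construction. -/
theorem main {κ : Cardinal.{0}} (hreg : κ.IsRegular) (hℵ : Cardinal.aleph0 < κ)
    {K : Type u} (uK : K → K → Ordinal) (hu : IsUltrametric κ.ord uK)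
    (Dset : ↥(Set.Iio κ.ord) → Set (Set K))
    (hDsub : ∀ β, Dset β ⊆ {s | ∃ x, s = Ball uK (β : Ordinal) x})
    (hDcov : ∀ β, ∀ x : K, ∃ d ∈ Dset β, x ∈ d)
    (hDcard : ∀ β, Cardinal.mk ↥(Dset β) < Cardinal.lift.{u} κ) :
    ∃ η : K → cantor κ,
      @Topology.IsEmbedding K (cantor κ) (ballTopology κ.ord uK)
        (ballTopology κ.ord (cantorUltra κ)) η ∧
      IsNowhereDense (Set.range η) := by
  classical
  have hκ0 : Cardinal.aleph0 ≤ κ := hℵ.le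
  have hlim : Order.IsSuccLimit κ.ord := Cardinal.isSuccLimit_ord hκ0
  letI tK : TopologicalSpace K := ballTopology κ.ord uK
  have hKself : ∀ (α : Ordinal), α ≤ κ.ord → ∀ x : K, x ∈ Ball uK α x := by
    intro α hα x
    show α ≤ uK x x
    rw [(hu.eq_gamma_iff x x).2 rfl]
    exact hα
  have hKeq : ∀ (α : Ordinal) (x y : K), y ∈ Ball uK α x → Ball uK α x = Ball uK α y := by
    intro α x y hy
    have hy' : α ≤ uK x y := hy
    ext z
    show α ≤ uK x z ↔ α ≤ uK y z
    constructor
    · intro hz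
      refine le_trans (le_min ?_ hz) (hu.triangle x y z)
      rw [hu.symm y x]; exact hy'
    · intro hz
      exact le_trans (le_min hy' hz) (hu.triangle y x z)
  have hDball : ∀ (β : ↥(Set.Iio κ.ord)) (d : Set K), d ∈ Dset β → ∀ x ∈ d,
      d = Ball uK (β : Ordinal) x := by
    intro β d hd x hx
    obtain ⟨y, rfl⟩ := hDsub β hd
    exact hKeq β y x hx
  have hmkΛ : #↥(Set.Iio κ.ord) = Cardinal.lift.{1} κ := by
    rw [Ordinal.mk_Iio_ordinal, Cardinal.card_ord]
  -- global injection of classes into coordinates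
  obtain ⟨e⟩ : Nonempty (((β : ↥(Set.Iio κ.ord)) × ↥(Dset β)) ↪ ↥(Set.Iio κ.ord)) := by
    rw [← Cardinal.lift_mk_le']
    calc Cardinal.lift.{1} #((β : ↥(Set.Iio κ.ord)) × ↥(Dset β))
        = Cardinal.lift.{1} (Cardinal.sum fun β : ↥(Set.Iio κ.ord) => #↥(Dset β)) := by
          rw [Cardinal.mk_sigma]
      _ ≤ Cardinal.lift.{1} (Cardinal.sum fun _ : ↥(Set.Iio κ.ord) => Cardinal.lift.{u} κ) := by
          exact Cardinal.lift_le.2 (Cardinal.sum_le_sum _ _ fun β => (hDcard β).le)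
      _ ≤ Cardinal.lift.{max 1 u} #↥(Set.Iio κ.ord) := by
          rw [Cardinal.sum_const, hmkΛ]
          simp only [Cardinal.lift_lift, Cardinal.lift_id']
          rw [Cardinal.mul_eq_self (by rw [Cardinal.aleph0_le_lift]; exact hκ0)]
          simp [Cardinal.lift_lift]
  -- the coding function
  have hcode_lt : ∀ t : (β : ↥(Set.Iio κ.ord)) × ↥(Dset β),
      Ordinal.omega0 * ((e t : Ordinal) + 1) < κ.ord := by
    intro t
    rw [Cardinal.lt_ord, Ordinal.card_mul, Ordinal.card_add, Ordinal.card_omega0,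
      Ordinal.card_one]
    apply Cardinal.mul_lt_of_lt hκ0 hℵ
    apply Cardinal.add_lt_of_lt hκ0
    · exact Cardinal.lt_ord.1 (e t).2
    · exact Cardinal.one_lt_aleph0.trans hℵ
  have hcode_inj : ∀ t t' : (β : ↥(Set.Iio κ.ord)) × ↥(Dset β),
      Ordinal.omega0 * ((e t : Ordinal) + 1) = Ordinal.omega0 * ((e t' : Ordinal) + 1) →
      t = t' := by
    intro t t' h
    have h2 : ((e t : Ordinal)) = (e t' : Ordinal) := by
      by_contra hne
      rcases lt_or_gt_of_ne hne with hlt' | hlt'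
      · have := (mul_lt_mul_iff_right₀ Ordinal.omega0_pos).2
          (show (e t : Ordinal) + 1 < (e t' : Ordinal) + 1 by
            rw [Ordinal.add_one_eq_succ, Ordinal.add_one_eq_succ]
            exact Order.succ_lt_succ hlt')
        rw [h] at this; exact lt_irrefl _ this
      · have := (mul_lt_mul_iff_right₀ Ordinal.omega0_pos).2
          (show (e t' : Ordinal) + 1 < (e t : Ordinal) + 1 by
            rw [Ordinal.add_one_eq_succ, Ordinal.add_one_eq_succ]
            exact Order.succ_lt_succ hlt')
        rw [h] at this; exact lt_irrefl _ this
    exact e.injective (Subtype.ext h2)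
  have hcode_limit : ∀ t : (β : ↥(Set.Iio κ.ord)) × ↥(Dset β),
      Order.IsSuccLimit (Ordinal.omega0 * ((e t : Ordinal) + 1)) := by
    intro t
    rw [Ordinal.add_one_eq_succ, Ordinal.mul_succ]
    exact Ordinal.isSuccLimit_add _ Ordinal.isSuccLimit_omega0
  -- the embedding
  set η : K → cantor κ := fun x p =>
    if (∃ t : (β : ↥(Set.Iio κ.ord)) × ↥(Dset β),
        (p : Ordinal) = Ordinal.omega0 * ((e t : Ordinal) + 1) ∧ x ∈ (t.2 : Set K))
    then true else false with hηdef
  have hηtrue : ∀ (x : K) (p : ↥(Set.Iio κ.ord)), η x p = true ↔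
      ∃ t : (β : ↥(Set.Iio κ.ord)) × ↥(Dset β),
        (p : Ordinal) = Ordinal.omega0 * ((e t : Ordinal) + 1) ∧ x ∈ (t.2 : Set K) := by
    intro x p
    by_cases h : (∃ t : (β : ↥(Set.Iio κ.ord)) × ↥(Dset β),
        (p : Ordinal) = Ordinal.omega0 * ((e t : Ordinal) + 1) ∧ x ∈ (t.2 : Set K))
    · exact iff_of_true (by simp only [hηdef]; exact if_pos h) h
    · exact iff_of_false (by simp only [hηdef]; rw [if_neg h]; decide) h
  have hηfalse : ∀ (x : K) (p : ↥(Set.Iio κ.ord)), η x p = false ↔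
      ¬ ∃ t : (β : ↥(Set.Iio κ.ord)) × ↥(Dset β),
        (p : Ordinal) = Ordinal.omega0 * ((e t : Ordinal) + 1) ∧ x ∈ (t.2 : Set K) := by
    intro x p
    rw [← hηtrue]
    cases h : η x p <;> simp
  -- membership transfer along close points
  have hmemiff : ∀ (t : (β : ↥(Set.Iio κ.ord)) × ↥(Dset β)) (x y : K),
      ((t.1 : Ordinal)) ≤ uK x y → (x ∈ (t.2 : Set K) ↔ y ∈ (t.2 : Set K)) := by
    intro t x y hxy
    constructor
    · intro hx
      rw [hDball t.1 ↑t.2 t.2.2 x hx]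
      exact hxy
    · intro hy
      rw [hDball t.1 ↑t.2 t.2.2 y hy]
      show (t.1 : Ordinal) ≤ uK y x
      rw [hu.symm y x]
      exact hxy
  -- pointwise agreement
  have hη_eq : ∀ (x y : K) (p : ↥(Set.Iio κ.ord)),
      (∀ t : (β : ↥(Set.Iio κ.ord)) × ↥(Dset β),
        (p : Ordinal) = Ordinal.omega0 * ((e t : Ordinal) + 1) → ((t.1 : Ordinal)) ≤ uK x y) →
      η x p = η y p := by
    intro x y p hcond
    by_cases hex : ∃ t : (β : ↥(Set.Iio κ.ord)) × ↥(Dset β),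
        (p : Ordinal) = Ordinal.omega0 * ((e t : Ordinal) + 1)
    · obtain ⟨t, ht⟩ := hex
      have hiff : (∃ t' : (β : ↥(Set.Iio κ.ord)) × ↥(Dset β),
          (p : Ordinal) = Ordinal.omega0 * ((e t' : Ordinal) + 1) ∧ x ∈ (t'.2 : Set K)) ↔
          (∃ t' : (β : ↥(Set.Iio κ.ord)) × ↥(Dset β),
          (p : Ordinal) = Ordinal.omega0 * ((e t' : Ordinal) + 1) ∧ y ∈ (t'.2 : Set K)) := by
        constructor
        · rintro ⟨t', ht', hxt'⟩
          exact ⟨t', ht', (hmemiff t' x y (hcond t' ht')).1 hxt'⟩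
        · rintro ⟨t', ht', hyt'⟩
          exact ⟨t', ht', (hmemiff t' x y (hcond t' ht')).2 hyt'⟩
      by_cases hx : ∃ t' : (β : ↥(Set.Iio κ.ord)) × ↥(Dset β),
          (p : Ordinal) = Ordinal.omega0 * ((e t' : Ordinal) + 1) ∧ x ∈ (t'.2 : Set K)
      · rw [(hηtrue x p).2 hx, ((hηtrue y p).2 (hiff.1 hx)).symm]
      · rw [(hηfalse x p).2 hx, ((hηfalse y p).2 (fun h => hx (hiff.2 h))).symm]
    · have hx := (hηfalse x p).2 (fun ⟨t, ht, _⟩ => hex ⟨t, ht⟩)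
      have hy := (hηfalse y p).2 (fun ⟨t, ht, _⟩ => hex ⟨t, ht⟩)
      rw [hx, hy]

  -- lower bound: uniform continuity of η
  have hlower : ∀ ρ : Ordinal, ρ < κ.ord → ∃ δ, δ < κ.ord ∧
      ∀ x y : K, δ ≤ uK x y → ρ ≤ cantorUltra κ (η x) (η y) := by
    intro ρ hρ
    set S : Set Ordinal := {o | ∃ t : (β : ↥(Set.Iio κ.ord)) × ↥(Dset β),
      Ordinal.omega0 * ((e t : Ordinal) + 1) < ρ ∧ o = (t.1 : Ordinal)} with hSdef
    have hSsub : ∀ o ∈ S, o < κ.ord := by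
      rintro o ⟨t, _, rfl⟩
      exact t.1.2
    have hScard : #↥S < Cardinal.lift.{1} κ := by
      have hch : ∀ o : ↥S, ∃ t : (β : ↥(Set.Iio κ.ord)) × ↥(Dset β),
          Ordinal.omega0 * ((e t : Ordinal) + 1) < ρ ∧ (o : Ordinal) = (t.1 : Ordinal) :=
        fun o => o.2
      choose w hw1 hw2 using hch
      have hinj : Function.Injective (fun o : ↥S =>
          (⟨Ordinal.omega0 * ((e (w o) : Ordinal) + 1), hw1 o⟩ : ↥(Set.Iio ρ))) := by
        intro o o' hoo
        have h1 := congrArg Subtype.val hoo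
        simp only at h1
        have h2 := hcode_inj _ _ h1
        apply Subtype.ext
        rw [hw2 o, hw2 o', h2]
      calc #↥S ≤ #↥(Set.Iio ρ) := Cardinal.mk_le_of_injective hinj
        _ = Cardinal.lift.{1} ρ.card := Ordinal.mk_Iio_ordinal ρ
        _ < Cardinal.lift.{1} κ := Cardinal.lift_lt.2 (Cardinal.lt_ord.1 hρ)
    refine ⟨sSup S, sSup_lt_ord_of_reg hreg hSsub hScard, ?_⟩
    intro x y hxy
    rw [le_cantorUltra_iff hρ]
    intro q hq
    apply hη_eq
    intro t ht
    have hmem : (t.1 : Ordinal) ∈ S := ⟨t, by rw [← ht]; exact hq, rfl⟩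
    exact le_trans (le_csSup ⟨κ.ord, fun o ho => (hSsub o ho).le⟩ hmem) hxy
  -- separation of distinct points at a definite coordinate
  have hsep : ∀ x y : K, uK x y < κ.ord →
      ∃ t : (β : ↥(Set.Iio κ.ord)) × ↥(Dset β), (t.1 : Ordinal) = uK x y + 1 ∧
        η x ⟨Ordinal.omega0 * ((e t : Ordinal) + 1), hcode_lt t⟩ = true ∧
        η y ⟨Ordinal.omega0 * ((e t : Ordinal) + 1), hcode_lt t⟩ = false := by
    intro x y hxy
    have hb1 : uK x y + 1 < κ.ord := by
      rw [Ordinal.add_one_eq_succ]; exact hlim.succ_lt hxy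
    obtain ⟨d, hd, hxd⟩ := hDcov ⟨uK x y + 1, hb1⟩ x
    refine ⟨⟨⟨uK x y + 1, hb1⟩, ⟨d, hd⟩⟩, rfl, ?_, ?_⟩
    · exact (hηtrue x _).2 ⟨_, rfl, hxd⟩
    · rw [hηfalse]
      rintro ⟨t', ht', hyt'⟩
      have ht0 := hcode_inj _ _ ht'
      rw [← ht0] at hyt'
      have hball : d = Ball uK (uK x y + 1) x := hDball _ d hd x hxd
      have hyball : y ∈ Ball uK (uK x y + 1) x := by
        rw [← hball]; exact hyt'
      have : uK x y + 1 ≤ uK x y := hyball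
      rw [Ordinal.add_one_eq_succ, Order.succ_le_iff] at this
      exact lt_irrefl _ this
  -- upper bound: uniform continuity of the inverse
  have hupper : ∀ α : Ordinal, α < κ.ord → ∃ H, H < κ.ord ∧
      ∀ x y : K, H ≤ cantorUltra κ (η x) (η y) → α ≤ uK x y := by
    intro α hα
    set S : Set Ordinal := {o | ∃ t : (β : ↥(Set.Iio κ.ord)) × ↥(Dset β),
      (t.1 : Ordinal) ≤ α ∧ o = Ordinal.omega0 * ((e t : Ordinal) + 1)} with hSdef
    have hSsub : ∀ o ∈ S, o < κ.ord := by
      rintro o ⟨t, _, rfl⟩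
      exact hcode_lt t
    have hαs : α + 1 < κ.ord := by rw [Ordinal.add_one_eq_succ]; exact hlim.succ_lt hα
    have hScard : #↥S < Cardinal.lift.{1} κ := by
      set αs : ↥(Set.Iio κ.ord) := ⟨α + 1, hαs⟩ with hαsdef
      have hch : ∀ o : ↥S, ∃ t : (β : ↥(Set.Iio κ.ord)) × ↥(Dset β),
          (t.1 : Ordinal) ≤ α ∧ (o : Ordinal) = Ordinal.omega0 * ((e t : Ordinal) + 1) :=
        fun o => o.2
      choose w hw1 hw2 using hch
      have hptex : ∀ o : ↥S, ∃ z : K, z ∈ ((w o).2 : Set K) := by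
        intro o
        obtain ⟨x0, hx0⟩ := hDsub (w o).1 (w o).2.2
        exact ⟨x0, by rw [hx0]; exact hKself _ (w o).1.2.le x0⟩
      choose pt hpt using hptex
      have hclsex : ∀ o : ↥S, ∃ d ∈ Dset αs, pt o ∈ d := fun o => hDcov αs (pt o)
      choose cls hcls1 hcls2 using hclsex
      have hinj : Function.Injective (fun o : ↥S =>
          ((⟨(w o).1, hw1 o⟩ : {b : ↥(Set.Iio κ.ord) // (b : Ordinal) ≤ α}),
           (⟨e ⟨αs, ⟨cls o, hcls1 o⟩⟩, ⟨⟨cls o, hcls1 o⟩, rfl⟩⟩ :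
             ↥(Set.range (fun d : ↥(Dset αs) => e ⟨αs, d⟩))))) := by
        intro o o' hoo
        simp only [Prod.mk.injEq] at hoo
        obtain ⟨h1, h2⟩ := hoo
        have hlev : ((w o).1 : ↥(Set.Iio κ.ord)) = (w o').1 := congrArg Subtype.val h1
        have h2' : e ⟨αs, ⟨cls o, hcls1 o⟩⟩ = e ⟨αs, ⟨cls o', hcls1 o'⟩⟩ :=
          congrArg Subtype.val h2
        have hclse := e.injective h2'
        have hclseq : cls o = cls o' := by
          injection hclse with h31 h32
          exact congrArg Subtype.val h32
        have hpt'o : pt o' ∈ cls o := by rw [hclseq]; exact hcls2 o'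
        have hco : cls o = Ball uK (α + 1) (pt o) :=
          hDball αs (cls o) (hcls1 o) (pt o) (hcls2 o)
        have huKpt : (α + 1 : Ordinal) ≤ uK (pt o) (pt o') := by
          rw [hco] at hpt'o; exact hpt'o
        have hwo2 : ((w o).2 : Set K) = Ball uK ((w o).1 : Ordinal) (pt o) :=
          hDball (w o).1 _ (w o).2.2 (pt o) (hpt o)
        have hwo'2 : ((w o').2 : Set K) = Ball uK ((w o').1 : Ordinal) (pt o') :=
          hDball (w o').1 _ (w o').2.2 (pt o') (hpt o')
        have hpt'wo : pt o' ∈ ((w o).2 : Set K) := by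
          rw [hwo2]
          show ((w o).1 : Ordinal) ≤ uK (pt o) (pt o')
          exact le_trans (hw1 o) (le_trans (le_add_right (le_refl α)) huKpt)
        have hseteq : ((w o).2 : Set K) = ((w o').2 : Set K) := by
          rw [hwo2, hwo'2, ← hlev]
          apply hKeq
          rw [← hwo2]
          exact hpt'wo
        have hwe : w o = w o' := sigma_ext_aux hlev hseteq
        apply Subtype.ext
        rw [hw2 o, hw2 o', hwe]
      have hA : #{b : ↥(Set.Iio κ.ord) // (b : Ordinal) ≤ α} < Cardinal.lift.{1} κ := by
        have hinj2 : Function.Injective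
            (fun b : {b : ↥(Set.Iio κ.ord) // (b : Ordinal) ≤ α} =>
              (⟨((b : ↥(Set.Iio κ.ord)) : Ordinal), by
                rw [Set.mem_Iio]; exact lt_of_le_of_lt b.2
                  (by rw [Ordinal.add_one_eq_succ]; exact Order.lt_succ α)⟩ :
                ↥(Set.Iio (α + 1)))) := by
          intro b b' hbb
          have hval := congrArg Subtype.val hbb
          simp only at hval
          exact Subtype.ext (Subtype.ext hval)
        calc #{b : ↥(Set.Iio κ.ord) // (b : Ordinal) ≤ α}
            ≤ #↥(Set.Iio (α + 1)) := Cardinal.mk_le_of_injective hinj2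
          _ = Cardinal.lift.{1} (α + 1).card := Ordinal.mk_Iio_ordinal _
          _ < Cardinal.lift.{1} κ := Cardinal.lift_lt.2 (Cardinal.lt_ord.1 hαs)
      have hB : #↥(Set.range (fun d : ↥(Dset αs) => e ⟨αs, d⟩)) < Cardinal.lift.{1} κ := by
        have h1 := Cardinal.mk_range_le_lift (f := fun d : ↥(Dset αs) => e ⟨αs, d⟩)
        have h2 : Cardinal.lift.{1} #↥(Dset αs) < Cardinal.lift.{1} (Cardinal.lift.{u} κ) :=
          Cardinal.lift_lt.2 (hDcard αs)
        rw [← Cardinal.lift_lt.{1, u}]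
        calc Cardinal.lift.{u} #↥(Set.range (fun d : ↥(Dset αs) => e ⟨αs, d⟩))
            ≤ Cardinal.lift.{1} #↥(Dset αs) := h1
          _ < Cardinal.lift.{1} (Cardinal.lift.{u} κ) := h2
          _ = Cardinal.lift.{u} (Cardinal.lift.{1} κ) := by
              rw [Cardinal.lift_lift, Cardinal.lift_lift]
      calc #↥S ≤ #({b : ↥(Set.Iio κ.ord) // (b : Ordinal) ≤ α} ×
            ↥(Set.range (fun d : ↥(Dset αs) => e ⟨αs, d⟩))) := Cardinal.mk_le_of_injective hinj
        _ < Cardinal.lift.{1} κ := by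
            rw [Cardinal.mk_prod]
            simp only [Cardinal.lift_id]
            exact Cardinal.mul_lt_of_lt (by rw [Cardinal.aleph0_le_lift]; exact hκ0) hA hB
    have hsupS := sSup_lt_ord_of_reg hreg hSsub hScard
    refine ⟨sSup S + 1, by rw [Ordinal.add_one_eq_succ]; exact hlim.succ_lt hsupS, ?_⟩
    intro x y hH
    by_contra hlt
    push_neg at hlt
    have hb2 : uK x y < κ.ord := hlt.trans hα
    obtain ⟨t, ht1, htx, hty⟩ := hsep x y hb2
    have hne : η x ⟨Ordinal.omega0 * ((e t : Ordinal) + 1), hcode_lt t⟩ ≠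
        η y ⟨Ordinal.omega0 * ((e t : Ordinal) + 1), hcode_lt t⟩ := by
      rw [htx, hty]; simp
    have hle1 : cantorUltra κ (η x) (η y) ≤ Ordinal.omega0 * ((e t : Ordinal) + 1) :=
      cantorUltra_le_of_ne hlim hne
    have hmem : Ordinal.omega0 * ((e t : Ordinal) + 1) ∈ S := by
      refine ⟨t, ?_, rfl⟩
      rw [ht1, Ordinal.add_one_eq_succ, Order.succ_le_iff]
      exact hlt
    have hle2 : Ordinal.omega0 * ((e t : Ordinal) + 1) ≤ sSup S :=
      le_csSup ⟨κ.ord, fun o ho => (hSsub o ho).le⟩ hmem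
    have hcontra : sSup S + 1 ≤ sSup S := le_trans hH (hle1.trans hle2)
    rw [Ordinal.add_one_eq_succ, Order.succ_le_iff] at hcontra
    exact lt_irrefl _ hcontra
  refine ⟨η, ?_, ?_⟩
  · -- embedding
    refine ⟨⟨?_⟩, ?_⟩
    · -- the topology of K is induced
      apply le_antisymm
      · -- continuity of η
        have hcont : @Continuous K (cantor κ) tK (ballTopology κ.ord (cantorUltra κ)) η := by
          have hgen : ballTopology κ.ord (cantorUltra κ) = TopologicalSpace.generateFrom
              {s : Set (cantor κ) | ∃ a α, α < κ.ord ∧ s = Ball (cantorUltra κ) α a} := rfl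
          rw [hgen, continuous_generateFrom_iff]
          rintro s ⟨a, α, hα, rfl⟩
          obtain ⟨δ, hδ, hδP⟩ := hlower α hα
          have hpre : η ⁻¹' Ball (cantorUltra κ) α a =
              ⋃ x : {x : K // η x ∈ Ball (cantorUltra κ) α a}, Ball uK δ ↑x := by
            ext z
            simp only [mem_preimage, mem_iUnion]
            constructor
            · intro hz
              exact ⟨⟨z, hz⟩, hKself δ hδ.le z⟩
            · rintro ⟨⟨x, hx⟩, hzx⟩
              have h1 : α ≤ cantorUltra κ a (η x) := hx
              have h2 : α ≤ cantorUltra κ (η x) (η z) := hδP x z hzx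
              show α ≤ cantorUltra κ a (η z)
              rw [le_cantorUltra_iff hα] at h1 h2 ⊢
              intro β hβ
              rw [h1 β hβ, h2 β hβ]
          rw [hpre]
          exact isOpen_iUnion fun x =>
            TopologicalSpace.isOpen_generateFrom_of_mem ⟨↑x, δ, hδ, rfl⟩
        exact continuous_iff_le_induced.1 hcont
      · -- the induced topology is finer
        rw [show (ballTopology κ.ord uK : TopologicalSpace K) = TopologicalSpace.generateFrom
            {s : Set K | ∃ x α, α < κ.ord ∧ s = Ball uK α x} from rfl,
          TopologicalSpace.le_generateFrom_iff_subset_isOpen]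
        rintro s ⟨x, α, hα, rfl⟩
        rw [mem_setOf_eq, isOpen_induced_iff]
        obtain ⟨H, hH, hHP⟩ := hupper α hα
        refine ⟨⋃ y : {y : K // y ∈ Ball uK α x}, Ball (cantorUltra κ) H (η ↑y),
          isOpen_iUnion fun y =>
            TopologicalSpace.isOpen_generateFrom_of_mem ⟨η ↑y, H, hH, rfl⟩, ?_⟩
        ext z
        simp only [mem_preimage, mem_iUnion]
        constructor
        · rintro ⟨⟨y, hy⟩, hzy⟩
          have h1 : α ≤ uK y z := hHP y z hzy
          show α ≤ uK x z
          exact le_trans (le_min hy h1) (hu.triangle y x z)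
        · intro hz
          refine ⟨⟨z, hz⟩, ?_⟩
          show H ≤ cantorUltra κ (η z) (η z)
          rw [le_cantorUltra_iff hH]
          intro β hβ
          rfl
    · -- injectivity
      intro x y hxy
      by_contra hne
      have h1 : uK x y < κ.ord :=
        lt_of_le_of_ne (hu.le_gamma x y) fun h => hne ((hu.eq_gamma_iff x y).1 h)
      obtain ⟨t, -, htx, hty⟩ := hsep x y h1
      rw [hxy] at htx
      rw [htx] at hty
      exact Bool.noConfusion hty
  · -- nowhere density
    set F : Set (cantor κ) := {a | ∀ p : ↥(Set.Iio κ.ord),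
        (∀ t : (β : ↥(Set.Iio κ.ord)) × ↥(Dset β),
          (p : Ordinal) ≠ Ordinal.omega0 * ((e t : Ordinal) + 1)) → a p = false} with hFdef
    have hrange : Set.range η ⊆ F := by
      rintro _ ⟨x, rfl⟩ p hp
      rw [hηfalse]
      rintro ⟨t, ht, -⟩
      exact hp t ht
    have hFclosed : IsClosed F := by
      rw [← isOpen_compl_iff]
      have hch : ∀ a : ↥Fᶜ, ∃ p : ↥(Set.Iio κ.ord),
          (∀ t : (β : ↥(Set.Iio κ.ord)) × ↥(Dset β),
            (p : Ordinal) ≠ Ordinal.omega0 * ((e t : Ordinal) + 1)) ∧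
          (a : cantor κ) p = true := by
        rintro ⟨a, ha⟩
        simp only [hFdef, mem_compl_iff, mem_setOf_eq] at ha
        push_neg at ha
        obtain ⟨p, hp1, hp2⟩ := ha
        refine ⟨p, hp1, ?_⟩
        show a p = true
        cases h : a p
        · exact absurd h hp2
        · rfl
      choose pw hw1 hw2 using hch
      have hceq : Fᶜ = ⋃ a : ↥Fᶜ, Ball (cantorUltra κ) ((pw a : Ordinal) + 1) ↑a := by
        ext b
        simp only [mem_iUnion]
        constructor
        · intro hb
          exact ⟨⟨b, hb⟩, cantor_mem_ball_self
            (by rw [Ordinal.add_one_eq_succ]; exact hlim.succ_lt (pw ⟨b, hb⟩).2)⟩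
        · rintro ⟨a, hba⟩
          have hlt : ((pw a : Ordinal)) + 1 < κ.ord := by
            rw [Ordinal.add_one_eq_succ]; exact hlim.succ_lt (pw a).2
          have hagree := (le_cantorUltra_iff hlt).1 hba
          have hbp : b (pw a) = true := by
            rw [← hagree (pw a) (by rw [Ordinal.add_one_eq_succ]; exact Order.lt_succ _)]
            exact hw2 a
          intro hbF
          have := hbF (pw a) (hw1 a)
          rw [hbp] at this
          exact Bool.noConfusion this
      rw [hceq]
      exact isOpen_iUnion fun a => TopologicalSpace.isOpen_generateFrom_of_mem
        ⟨↑a, (pw a : Ordinal) + 1,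
          by rw [Ordinal.add_one_eq_succ]; exact hlim.succ_lt (pw a).2, rfl⟩
    have hbase := isBasis_balls κ.ord (cantorUltra κ) hlim.pos
      (fun α hα a => cantor_mem_ball_self hα)
      (fun α hα x y h => cantor_ball_eq hα h)
    have hint : interior F = ∅ := by
      rw [eq_empty_iff_forall_notMem]
      intro a ha
      obtain ⟨s, ⟨b, α, hα, rfl⟩, hab, hsub⟩ :=
        hbase.exists_subset_of_mem_open ha isOpen_interior
      have hq1 : α + 1 < κ.ord := by
        rw [Ordinal.add_one_eq_succ]; exact hlim.succ_lt hα
      set q : ↥(Set.Iio κ.ord) := ⟨α + 1, hq1⟩ with hqdef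
      have hqnc : ∀ t : (β : ↥(Set.Iio κ.ord)) × ↥(Dset β),
          (q : Ordinal) ≠ Ordinal.omega0 * ((e t : Ordinal) + 1) := by
        intro t h
        have hl := hcode_limit t
        rw [← h] at hl
        have : (q : Ordinal) = α + 1 := rfl
        rw [this, Ordinal.add_one_eq_succ] at hl
        exact absurd (hl.succ_lt (Order.lt_succ α)) (lt_irrefl _)
      set b' : cantor κ := Function.update a q true with hb'def
      have hb'q : b' q = true := by rw [hb'def]; exact Function.update_self q true a
      have hb'ball : b' ∈ Ball (cantorUltra κ) α a := by
        show α ≤ cantorUltra κ a b'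
        rw [le_cantorUltra_iff hα]
        intro β hβ
        have hne : β ≠ q := by
          intro h
          rw [h] at hβ
          have : (q : Ordinal) = α + 1 := rfl
          rw [this] at hβ
          exact absurd hβ (not_lt.2 (le_add_right (le_refl α)))
        rw [hb'def]
        exact (Function.update_of_ne hne true a).symm
      have hb'F : b' ∈ F := by
        apply interior_subset
        apply hsub
        rw [cantor_ball_eq hα hab]
        exact hb'ball
      have := hb'F q hqnc
      rw [hb'q] at this
      exact Bool.noConfusion this
    show interior (closure (Set.range η)) = ∅
    have hclo : closure (Set.range η) ⊆ F := closure_minimal hrange hFclosed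
    have hsub2 := interior_mono hclo
    rw [hint] at hsub2
    exact subset_empty_iff.1 hsub2


end Stmt17Aux

theorem stmt17 (κ : Cardinal.{0}) (hκ : WeaklyCompact κ)
    (K : Type u) (uK : K → K → Ordinal) (hu : IsUltrametric κ.ord uK)
    (hc : KappaCompact K (ballTopology κ.ord uK) κ)
    (hw : WeightLE K (ballTopology κ.ord uK) κ) :
    ∃ η : K → cantor κ,
      @Topology.IsEmbedding K (cantor κ) (ballTopology κ.ord uK)
        (ballTopology κ.ord (cantorUltra κ)) η ∧
      IsNowhereDense (Set.range η) := by
  classical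
  have hreg : κ.IsRegular := Stmt17Aux.regular_of_wc hκ
  obtain ⟨hℵ, -⟩ := hκ
  have hKself : ∀ (β : ↥(Set.Iio κ.ord)) (x : K), x ∈ Ball uK (β : Ordinal) x := by
    intro β x
    show (β : Ordinal) ≤ uK x x
    rw [(hu.eq_gamma_iff x x).2 rfl]
    exact β.2.le
  have hDex : ∀ β : ↥(Set.Iio κ.ord), ∃ D : Set (Set K),
      D ⊆ {s | ∃ x, s = Ball uK (β : Ordinal) x} ∧ (∀ x : K, ∃ d ∈ D, x ∈ d) ∧
      Cardinal.mk ↥D < Cardinal.lift.{u} κ := by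
    intro β
    have hopen : ∀ s ∈ {s : Set K | ∃ x, s = Ball uK (β : Ordinal) x},
        (ballTopology κ.ord uK).IsOpen s := by
      rintro s ⟨x, rfl⟩
      exact TopologicalSpace.isOpen_generateFrom_of_mem ⟨x, β, β.2, rfl⟩
    have hcover : ⋃₀ {s : Set K | ∃ x, s = Ball uK (β : Ordinal) x} = Set.univ := by
      apply Set.eq_univ_of_forall
      intro x
      exact ⟨Ball uK β x, ⟨x, rfl⟩, hKself β x⟩
    obtain ⟨D, hDC, hDcard, hDcov⟩ := hc _ hopen hcover
    refine ⟨D, hDC, ?_, hDcard⟩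
    intro x
    have hx : x ∈ ⋃₀ D := by rw [hDcov]; trivial
    exact Set.mem_sUnion.1 hx
  choose Dset hDsub hDcov hDcard using hDex
  exact Stmt17Aux.main hreg hℵ uK hu Dset hDsub hDcov hDcard
end
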